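/- arXiv:2412.02031 — 6 statements merged into one kernel-verified Lean document; each statement's English description precedes it below -/
import Mathlib

section
/- Let t ≥ 1 be an integer, p ∈ ℕ (possibly 0), and a, b ∈ ℝ with ab > 0; set q = a/b. If p + t is odd, then (sign(b)/p!)·b^{p+1}·∫_{−∞}^{∞} x^p · Li_t(−e^{ax})/(1 + e^{bx}) dx = ((−1)^{p+1}/q^{p+1})·η(p+t+1) − 2·∑_{j=0}^{⌊t/2⌋} q^{t−2j} · C(p+t−2j, p) · η(p+t+1−2j) · η(2j), where C(n,k) denotes the binomial coefficient. -/
open MeasureTheory Filter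

/-- Dirichlet eta function at natural arguments: `η(0)=1/2`, `η(1)=log 2`,
and for `s ≥ 2` the (absolutely convergent) series `∑ (-1)^{n+1}/n^s`. -/
noncomputable def dEta (s : ℕ) : ℝ :=
  if s = 0 then 1/2
  else if s = 1 then Real.log 2
  else ∑' n : ℕ, (-1 : ℝ)^n / ((n : ℝ)+1)^s

/-- Riemann zeta at natural arguments `s ≥ 2`: `∑ 1/n^s`. -/
noncomputable def rZeta (s : ℕ) : ℝ := ∑' n : ℕ, 1 / ((n : ℝ)+1)^s

/-- `negLi t u = Li_t(-u)` for `t ≥ 1`, `u > 0`, via the Fermi–Dirac integral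
representation `Li_t(-u) = -(1/(t-1)!) ∫_0^∞ s^{t-1}/(u⁻¹ e^s + 1) ds`. -/
noncomputable def negLi (t : ℕ) (u : ℝ) : ℝ :=
  -(1 / ((t-1).factorial : ℝ)) * ∫ s in Set.Ioi (0:ℝ), s^(t-1) / (u⁻¹ * Real.exp s + 1)

/-- Extended harmonic number `H_λ^{(p)} = ∑_{j=1}^∞ (1/j^p - 1/(j+λ)^p)`. -/
noncomputable def Hext (p : ℕ) (lam : ℝ) : ℝ :=
  ∑' j : ℕ, (1/((j:ℝ)+1)^p - 1/(((j:ℝ)+1)+lam)^p)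

/-- Alternating linear Euler sum `S^{+-}_{p,t}(r) = ∑_{n=1}^∞ (-1)^{n+1} H_{rn}^{(p)}/n^t`,
as a limit of partial sums. -/
noncomputable def eulerS (p t : ℕ) (r : ℝ) : ℝ :=
  limUnder atTop
    (fun N => ∑ n ∈ Finset.range N, (-1:ℝ)^n * Hext p (r*((n:ℝ)+1)) / ((n:ℝ)+1)^t)

open Set Real Asymptotics

lemma integrable_pow_exp (n : ℕ) {c : ℝ} (hc : 0 < c) :
    IntegrableOn (fun x : ℝ => x ^ n * Real.exp (-(c * x))) (Set.Ioi 0) := by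
  have h2 : (0:ℝ) < c/2 := by linarith
  refine integrable_of_isBigO_exp_neg h2 ?_ ?_
  · exact (continuous_pow n).continuousOn.mul (Real.continuous_exp.comp (by fun_prop)).continuousOn
  · have ht : Tendsto (fun x : ℝ => x ^ n * Real.exp (-((c/2) * x))) atTop (nhds 0) := by
      have := tendsto_rpow_mul_exp_neg_mul_atTop_nhds_zero (n:ℝ) (c/2) h2
      refine this.congr' ?_
      filter_upwards [eventually_gt_atTop (0:ℝ)] with x hx
      rw [Real.rpow_natCast, neg_mul]
    have hO : (fun x : ℝ => x ^ n * Real.exp (-((c/2) * x))) =O[atTop] (fun _ => (1:ℝ)) :=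
      ht.isBigO_one ℝ
    have : (fun x : ℝ => x ^ n * Real.exp (-(c * x)))
        = fun x => (x ^ n * Real.exp (-((c/2) * x))) * Real.exp (-((c/2) * x)) := by
      funext x
      rw [mul_assoc, ← Real.exp_add]
      ring_nf
    rw [this]
    simpa using hO.mul (isBigO_refl (fun x : ℝ => Real.exp (-((c/2) * x))) atTop)

lemma integral_pow_exp (n : ℕ) {c : ℝ} (hc : 0 < c) :
    ∫ x in Set.Ioi (0:ℝ), x ^ n * Real.exp (-(c * x)) = n.factorial / c ^ (n + 1) := by
  have h := Real.integral_rpow_mul_exp_neg_mul_Ioi (a := (n+1:ℝ)) (r := c) (by positivity) hc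
  rw [show ((n:ℝ)+1-1) = (n:ℝ) by ring] at h
  rw [show (∫ x in Set.Ioi (0:ℝ), x ^ n * Real.exp (-(c * x)))
      = ∫ x in Set.Ioi (0:ℝ), x ^ (n:ℝ) * Real.exp (-(c * x)) from
    setIntegral_congr_fun measurableSet_Ioi (fun x hx => by
      rw [Real.rpow_natCast]), h]
  rw [show ((n:ℝ)+1) = ((n+1:ℕ):ℝ) by push_cast; ring, Real.rpow_natCast]
  rw [show Real.Gamma ((n+1:ℕ):ℝ) = n.factorial by
    push_cast; exact Real.Gamma_nat_eq_factorial n]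
  rw [div_pow, one_pow]
  ring

lemma fd_denom_pos {u : ℝ} (hu : 0 < u) (s : ℝ) : 0 < u⁻¹ * Real.exp s + 1 := by positivity

lemma fd_bound {u : ℝ} (hu : 0 < u) {s : ℝ} (hs : 0 ≤ s) (k : ℕ) :
    s ^ k / (u⁻¹ * Real.exp s + 1) ≤ u * (s ^ k * Real.exp (-(1 * s))) := by
  have h1 : (u⁻¹ * Real.exp s + 1) ≥ u⁻¹ * Real.exp s := by linarith
  have h2 : s ^ k / (u⁻¹ * Real.exp s + 1) ≤ s ^ k / (u⁻¹ * Real.exp s) := by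
    apply div_le_div_of_nonneg_left (by positivity) (by positivity) h1
  calc s ^ k / (u⁻¹ * Real.exp s + 1) ≤ s ^ k / (u⁻¹ * Real.exp s) := h2
    _ = u * (s ^ k * Real.exp (-(1 * s))) := by
        rw [Real.exp_neg]
        field_simp

lemma fd_cont {u : ℝ} (hu : 0 < u) (k : ℕ) :
    Continuous (fun s : ℝ => s ^ k / (u⁻¹ * Real.exp s + 1)) := by
  apply (continuous_pow k).div (by fun_prop)
  intro s; exact (fd_denom_pos hu s).ne'

lemma fd_integrable {u : ℝ} (hu : 0 < u) (k : ℕ) :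
    IntegrableOn (fun s : ℝ => s ^ k / (u⁻¹ * Real.exp s + 1)) (Set.Ioi 0) := by
  refine Integrable.mono ((integrable_pow_exp k one_pos).const_mul u)
    ((fd_cont hu k).aestronglyMeasurable.restrict) ?_
  rw [ae_restrict_iff' measurableSet_Ioi]
  refine ae_of_all _ (fun s hs => ?_)
  rw [Real.norm_eq_abs, Real.norm_eq_abs]
  have h0 : (0:ℝ) < s := hs
  have hb := fd_bound hu h0.le k
  have hd := fd_denom_pos hu s
  have hk : (0:ℝ) ≤ s ^ k := pow_nonneg h0.le k
  rw [abs_of_nonneg (by positivity : (0:ℝ) ≤ s ^ k / (u⁻¹ * Real.exp s + 1)),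
    abs_of_nonneg (by positivity : (0:ℝ) ≤ u * (s ^ k * Real.exp (-(1 * s))))]
  exact hb

lemma fd_integral_nonneg {u : ℝ} (hu : 0 < u) (k : ℕ) :
    0 ≤ ∫ s in Set.Ioi (0:ℝ), s ^ k / (u⁻¹ * Real.exp s + 1) := by
  apply setIntegral_nonneg measurableSet_Ioi
  intro s hs
  have h1 := fd_denom_pos hu s
  have h2 : (0:ℝ) ≤ s ^ k := pow_nonneg (le_of_lt hs) k
  positivity

lemma fd_integral_le {u : ℝ} (hu : 0 < u) (k : ℕ) :
    ∫ s in Set.Ioi (0:ℝ), s ^ k / (u⁻¹ * Real.exp s + 1) ≤ u * k.factorial := by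
  have h1 : ∫ s in Set.Ioi (0:ℝ), u * (s ^ k * Real.exp (-(1 * s)))
      = u * (k.factorial / 1 ^ (k+1)) := by
    rw [MeasureTheory.integral_const_mul, integral_pow_exp k one_pos]
  rw [one_pow, div_one] at h1
  rw [← h1]
  refine setIntegral_mono_on (fd_integrable hu k) (((integrable_pow_exp k one_pos).const_mul u)) measurableSet_Ioi (fun s hs => fd_bound hu (le_of_lt hs) k)

lemma negLi_abs_le {t : ℕ} (ht : 1 ≤ t) {u : ℝ} (hu : 0 < u) : |negLi t u| ≤ u := by
  rw [negLi, neg_mul, abs_neg, abs_mul]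
  rw [abs_of_nonneg (by positivity : (0:ℝ) ≤ 1 / ((t-1).factorial : ℝ)),
    abs_of_nonneg (fd_integral_nonneg hu (t-1))]
  rw [div_mul_eq_mul_div, one_mul, div_le_iff₀ (by positivity)]
  calc (∫ s in Set.Ioi (0:ℝ), s ^ (t-1) / (u⁻¹ * Real.exp s + 1))
      ≤ u * (t-1).factorial := fd_integral_le hu (t-1)
    _ = u * ((t-1).factorial : ℝ) := by norm_num

lemma summable_aux {t : ℕ} (ht : 1 ≤ t) {u : ℝ} (hu : 0 < u) (hu1 : u ≤ 1)
    (h : u < 1 ∨ 2 ≤ t) :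
    Summable (fun m : ℕ => u ^ (m+1) * (((t-1).factorial : ℝ) / ((m:ℝ)+1) ^ t)) := by
  rcases h with h | h
  · refine Summable.of_nonneg_of_le (fun m => by positivity) (fun m => ?_)
      (((summable_geometric_of_lt_one hu.le h).mul_left ((t-1).factorial * u)))
    have h1 : ((m:ℝ)+1) ^ t ≥ 1 := one_le_pow₀ (by linarith [Nat.cast_nonneg (α := ℝ) m])
    calc u ^ (m+1) * (((t-1).factorial : ℝ) / ((m:ℝ)+1) ^ t)
        ≤ u ^ (m+1) * (((t-1).factorial : ℝ) / 1) := by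
          apply mul_le_mul_of_nonneg_left _ (by positivity)
          apply div_le_div_of_nonneg_left (by positivity) one_pos h1
      _ = ((t-1).factorial * u) * u ^ m := by rw [pow_succ]; ring
  · have hs : Summable (fun m : ℕ => ((t-1).factorial : ℝ) * (1 / ((m:ℝ)+1) ^ 2)) := by
      apply Summable.mul_left
      exact_mod_cast (Real.summable_one_div_nat_pow.mpr one_lt_two).comp_injective
        (add_left_injective 1) |>.congr (fun m => by simp only [Function.comp_apply]; push_cast; ring_nf)
    refine Summable.of_nonneg_of_le (fun m => by positivity) (fun m => ?_) hs
    have h1 : ((m:ℝ)+1) ^ 2 ≤ ((m:ℝ)+1) ^ t :=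
      pow_le_pow_right₀ (by linarith [Nat.cast_nonneg (α := ℝ) m]) h
    have h2 : u ^ (m+1) ≤ 1 := pow_le_one₀ hu.le hu1
    calc u ^ (m+1) * (((t-1).factorial : ℝ) / ((m:ℝ)+1) ^ t)
        ≤ 1 * (((t-1).factorial : ℝ) / ((m:ℝ)+1) ^ 2) := by
          apply mul_le_mul h2 _ (by positivity) one_pos.le
          apply div_le_div_of_nonneg_left (by positivity) (by positivity) h1
      _ = ((t-1).factorial : ℝ) * (1 / ((m:ℝ)+1) ^ 2) := by ring

lemma negLi_series {t : ℕ} (ht : 1 ≤ t) {u : ℝ} (hu : 0 < u) (hu1 : u ≤ 1)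
    (h : u < 1 ∨ 2 ≤ t) :
    negLi t u = ∑' m : ℕ, (-1:ℝ)^(m+1) * u^(m+1) / ((m:ℝ)+1)^t := by
  have htt : t - 1 + 1 = t := Nat.succ_pred_eq_of_pos ht
  set F : ℕ → ℝ → ℝ :=
    fun m s => ((-1:ℝ)^(m+1) * u^(m+1)) * (s^(t-1) * Real.exp (-(((m:ℝ)+1) * s))) with hF
  have hm1 : ∀ m : ℕ, (0:ℝ) < (m:ℝ)+1 := fun m => by positivity
  have hFint : ∀ m : ℕ, Integrable (F m) (volume.restrict (Set.Ioi 0)) :=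
    fun m => (integrable_pow_exp (t-1) (hm1 m)).const_mul _
  have hnorm : ∀ m : ℕ, (∫ s in Set.Ioi (0:ℝ), ‖F m s‖)
      = u ^ (m+1) * (((t-1).factorial : ℝ) / ((m:ℝ)+1) ^ t) := by
    intro m
    rw [show (∫ s in Set.Ioi (0:ℝ), ‖F m s‖)
        = ∫ s in Set.Ioi (0:ℝ), u^(m+1) * (s^(t-1) * Real.exp (-(((m:ℝ)+1) * s))) from
      setIntegral_congr_fun measurableSet_Ioi (fun s hs => by
        have h0 : (0:ℝ) < s := hs
        have hxp : (0:ℝ) ≤ s ^ (t-1) * Real.exp (-(((m:ℝ)+1) * s)) := by positivity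
        simp only [hF, Real.norm_eq_abs, abs_mul, abs_pow, abs_neg, abs_one, one_pow, one_mul,
          abs_of_nonneg hu.le, abs_of_nonneg hxp])]
    rw [MeasureTheory.integral_const_mul, integral_pow_exp (t-1) (hm1 m), htt]
  have hsum : Summable (fun m : ℕ => ∫ s in Set.Ioi (0:ℝ), ‖F m s‖) := by
    rw [funext hnorm]
    exact summable_aux ht hu hu1 h
  have hswap := MeasureTheory.integral_tsum_of_summable_integral_norm hFint hsum
  have hptw : ∀ s ∈ Set.Ioi (0:ℝ),
      (∑' m : ℕ, F m s) = -(s^(t-1) / (u⁻¹ * Real.exp s + 1)) := by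
    intro s hs
    have h0 : (0:ℝ) < s := hs
    set r : ℝ := -(u * Real.exp (-s)) with hr
    have hes : Real.exp (-s) < 1 := by
      rw [Real.exp_lt_one_iff]; linarith
    have hrn : ‖r‖ < 1 := by
      rw [hr, norm_neg, Real.norm_eq_abs, abs_of_nonneg (by positivity)]
      calc u * Real.exp (-s) ≤ 1 * Real.exp (-s) := by
            apply mul_le_mul_of_nonneg_right hu1 (Real.exp_nonneg _)
        _ < 1 := by rwa [one_mul]
    have hFr : ∀ m : ℕ, F m s = (s^(t-1) * r) * r ^ m := by
      intro m
      simp only [hF, hr]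
      rw [show s ^ (t-1) * -(u * Real.exp (-s)) * (-(u * Real.exp (-s))) ^ m
          = s ^ (t-1) * (-(u * Real.exp (-s))) ^ (m+1) by rw [pow_succ]; ring]
      rw [neg_pow (u * Real.exp (-s)) (m+1), mul_pow, ← Real.exp_nat_mul]
      rw [show ((m+1:ℕ):ℝ) * (-s) = -(((m:ℝ)+1) * s) by push_cast; ring]
      ring
    rw [funext hFr, tsum_mul_left, tsum_geometric_of_norm_lt_one hrn]
    rw [hr]
    have he := Real.exp_ne_zero s
    have he' := Real.exp_neg s
    rw [he']
    have hd : u⁻¹ * Real.exp s + 1 ≠ 0 := by positivity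
    have hd' : Real.exp s + u ≠ 0 := by positivity
    field_simp
    rw [sub_neg_eq_add, div_self hd']
  have hint_eq : (∫ s in Set.Ioi (0:ℝ), (∑' m : ℕ, F m s))
      = ∫ s in Set.Ioi (0:ℝ), -(s^(t-1) / (u⁻¹ * Real.exp s + 1)) :=
    setIntegral_congr_fun measurableSet_Ioi hptw
  have hFi : ∀ m : ℕ, (∫ s in Set.Ioi (0:ℝ), F m s)
      = ((-1:ℝ)^(m+1) * u^(m+1)) * (((t-1).factorial : ℝ) / ((m:ℝ)+1) ^ t) := by
    intro m
    rw [hF, MeasureTheory.integral_const_mul, integral_pow_exp (t-1) (hm1 m), htt]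
  rw [negLi]
  rw [show (∫ s in Set.Ioi (0:ℝ), s^(t-1) / (u⁻¹ * Real.exp s + 1))
      = -∑' m : ℕ, (∫ s in Set.Ioi (0:ℝ), F m s) by
    rw [hswap, hint_eq, integral_neg, neg_neg]]
  rw [funext hFi]
  have hfac : ((t-1).factorial : ℝ) ≠ 0 := by positivity
  rw [show (fun m : ℕ => ((-1:ℝ)^(m+1) * u^(m+1)) * (((t-1).factorial:ℝ) / ((m:ℝ)+1)^t))
      = fun m : ℕ => ((t-1).factorial:ℝ) * ((-1:ℝ)^(m+1) * u^(m+1) / ((m:ℝ)+1)^t) from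
    funext fun m => by ring]
  rw [tsum_mul_left]
  field_simp

lemma negLi_continuousAt (t : ℕ) {u : ℝ} (hu : 0 < u) : ContinuousAt (negLi t) u := by
  unfold negLi
  apply ContinuousAt.mul continuousAt_const
  apply MeasureTheory.continuousAt_of_dominated
    (bound := fun s => (2*u) * (s^(t-1) * Real.exp (-(1 * s))))
  · filter_upwards [Ioo_mem_nhds hu (by linarith : u < 2*u)] with x hx
    exact ((fd_cont hx.1 (t-1)).aestronglyMeasurable).restrict
  · filter_upwards [Ioo_mem_nhds hu (by linarith : u < 2*u)] with x hx
    rw [ae_restrict_iff' measurableSet_Ioi]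
    refine ae_of_all _ (fun s hs => ?_)
    have h0 : (0:ℝ) < s := hs
    have hd := fd_denom_pos hx.1 s
    have hk : (0:ℝ) ≤ s ^ (t-1) := pow_nonneg h0.le _
    rw [Real.norm_eq_abs, abs_of_nonneg (by positivity)]
    calc s ^ (t-1) / (x⁻¹ * Real.exp s + 1) ≤ x * (s^(t-1) * Real.exp (-(1*s))) :=
          fd_bound hx.1 h0.le (t-1)
      _ ≤ (2*u) * (s^(t-1) * Real.exp (-(1*s))) := by
          apply mul_le_mul_of_nonneg_right (le_of_lt hx.2) (by positivity)
  · exact (integrable_pow_exp (t-1) one_pos).const_mul _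
  · refine ae_of_all _ (fun s => ?_)
    apply ContinuousAt.div continuousAt_const
    · exact ((continuousAt_inv₀ hu.ne').mul continuousAt_const).add continuousAt_const
    · exact (fd_denom_pos hu s).ne'

lemma negLi_exp_continuous (t : ℕ) (c : ℝ) :
    Continuous (fun x : ℝ => negLi t (Real.exp (c * x))) := by
  rw [continuous_iff_continuousAt]
  intro x
  have h1 : Continuous (fun x : ℝ => Real.exp (c * x)) :=
    Real.continuous_exp.comp (continuous_const.mul continuous_id)
  have h2 := ContinuousAt.comp (f := fun x : ℝ => Real.exp (c * x)) (g := negLi t) (x := x)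
    (negLi_continuousAt t (Real.exp_pos (c * x))) h1.continuousAt
  exact h2

lemma setIntegral_Ioi_comp_add (f : ℝ → ℝ) (a d : ℝ) :
    ∫ x in Set.Ioi a, f (x + d) = ∫ x in Set.Ioi (a + d), f x := by
  have A : MeasurableEmbedding (fun x : ℝ => x + d) :=
    (Homeomorph.addRight d).isClosedEmbedding.measurableEmbedding
  have h := A.setIntegral_map (μ := volume) (g := f) (s := Set.Ioi (a + d))
  rw [map_add_right_eq_self volume d] at h
  rw [show (fun x : ℝ => x + d) ⁻¹' Set.Ioi (a + d) = Set.Ioi a from by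
    ext x; simp [Set.mem_preimage, Set.mem_Ioi]] at h
  exact h.symm

lemma dEta_eq {s : ℕ} (hs : 2 ≤ s) : dEta s = ∑' n : ℕ, (-1 : ℝ)^n / ((n : ℝ)+1)^s := by
  rw [dEta, if_neg (by omega), if_neg (by omega)]

lemma negLi_one {t : ℕ} (ht : 2 ≤ t) : negLi t 1 = -dEta t := by
  rw [negLi_series (by omega) one_pos le_rfl (Or.inr ht), dEta_eq ht, ← tsum_neg]
  apply tsum_congr
  intro m
  rw [pow_succ, one_pow]
  ring

lemma eta_integral {k : ℕ} (hk : 1 ≤ k) :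
    ∫ s in Set.Ioi (0:ℝ), s^k / (Real.exp s + 1) = (k.factorial : ℝ) * dEta (k+1) := by
  have h := negLi_one (t := k+1) (by omega)
  rw [negLi] at h
  simp only [Nat.add_sub_cancel, inv_one, one_mul] at h
  have hfac : (k.factorial : ℝ) ≠ 0 := by positivity
  field_simp at h
  linarith [h]

lemma sum_odd_only (t : ℕ) (g : ℕ → ℝ) (hg : ∀ i, g (2*i) = 0) :
    ∑ k ∈ Finset.range t, g k = ∑ j ∈ Finset.range (t/2), g (2*j+1) := by
  induction t with
  | zero => simp
  | succ n ih =>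
    rw [Finset.sum_range_succ, ih]
    rcases Nat.even_or_odd n with ⟨m, hm⟩ | ⟨m, hm⟩
    · have h1 : g n = 0 := by rw [hm, ← two_mul]; exact hg m
      have h2 : (n+1)/2 = n/2 := by omega
      rw [h1, add_zero, h2]
    · have h1 : (n+1)/2 = m+1 := by omega
      have h2 : n/2 = m := by omega
      rw [h1, h2, Finset.sum_range_succ, hm]

lemma w_continuous : Continuous (fun y : ℝ => (Real.exp y + 1)⁻¹) := by
  apply Continuous.inv₀ (by fun_prop)
  intro y
  positivity

lemma w_le (y : ℝ) : (Real.exp y + 1)⁻¹ ≤ Real.exp (-y) := by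
  rw [Real.exp_neg]
  apply inv_anti₀ (Real.exp_pos y)
  linarith

lemma w_nonneg (y : ℝ) : 0 ≤ (Real.exp y + 1)⁻¹ := by positivity

lemma w_int (k : ℕ) : IntegrableOn (fun y : ℝ => y^k * (Real.exp y + 1)⁻¹) (Set.Ioi 0) := by
  refine Integrable.mono (integrable_pow_exp k one_pos)
    (((continuous_pow k).mul w_continuous).aestronglyMeasurable.restrict) ?_
  rw [ae_restrict_iff' measurableSet_Ioi]
  refine ae_of_all _ (fun y hy => ?_)
  have h0 : (0:ℝ) < y := hy
  rw [Real.norm_eq_abs, Real.norm_eq_abs, abs_mul,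
    abs_of_nonneg (pow_nonneg h0.le _), abs_of_nonneg (w_nonneg y),
    abs_of_nonneg (by positivity : (0:ℝ) ≤ y^k * Real.exp (-(1*y)))]
  rw [one_mul]
  exact mul_le_mul_of_nonneg_left (w_le y) (pow_nonneg h0.le _)

lemma w_neg (y : ℝ) : (Real.exp (-y) + 1)⁻¹ = 1 - (Real.exp y + 1)⁻¹ := by
  have h1 : Real.exp y + 1 ≠ 0 := by positivity
  have h2 : Real.exp (-y) + 1 ≠ 0 := by positivity
  rw [Real.exp_neg] at h2 ⊢
  field_simp
  ring

lemma hrepr {t : ℕ} (c : ℝ) : negLi t (Real.exp c)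
    = -(1/((t-1).factorial:ℝ)) * ∫ y in Set.Ioi (-c), (y + c)^(t-1) * (Real.exp y + 1)⁻¹ := by
  rw [negLi]
  congr 1
  rw [show Set.Ioi (-c) = Set.Ioi (0 + -c) by norm_num,
    ← setIntegral_Ioi_comp_add (fun y => (y + c)^(t-1) * (Real.exp y + 1)⁻¹) 0 (-c)]
  apply setIntegral_congr_fun measurableSet_Ioi
  intro s hs
  simp only
  rw [show s + -c + c = s by ring]
  have hh : (Real.exp c)⁻¹ * Real.exp s = Real.exp (s + -c) := by
    rw [← Real.exp_neg, ← Real.exp_add, add_comm]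
  rw [hh, div_eq_mul_inv]

lemma plus_expand {t : ℕ} (ht : 1 ≤ t) (z : ℝ) :
    (fun y : ℝ => (y+z)^(t-1) * (Real.exp y + 1)⁻¹)
    = fun y : ℝ => ∑ k ∈ Finset.range t, (((t-1).choose k : ℝ) * z^(t-1-k)) * (y^k * (Real.exp y + 1)⁻¹) := by
  funext y
  rw [add_pow, show t-1+1 = t by omega, Finset.sum_mul]
  apply Finset.sum_congr rfl
  intro k hk
  ring

lemma minus_expand {t : ℕ} (ht : 1 ≤ t) (z : ℝ) :
    (fun y : ℝ => (z-y)^(t-1) * (Real.exp y + 1)⁻¹)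
    = fun y : ℝ => ∑ k ∈ Finset.range t, ((-1:ℝ)^k * ((t-1).choose k : ℝ) * z^(t-1-k)) * (y^k * (Real.exp y + 1)⁻¹) := by
  funext y
  rw [show z - y = -y + z by ring, add_pow, show t-1+1 = t by omega, Finset.sum_mul]
  apply Finset.sum_congr rfl
  intro k hk
  rw [neg_pow]
  ring

lemma plus_int {t : ℕ} (ht : 1 ≤ t) (z : ℝ) :
    IntegrableOn (fun y : ℝ => (y+z)^(t-1) * (Real.exp y + 1)⁻¹) (Set.Ioi 0) := by
  rw [plus_expand ht z]
  exact MeasureTheory.integrable_finset_sum _ (fun k _ => (w_int k).const_mul _)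

lemma minus_int {t : ℕ} (ht : 1 ≤ t) (z : ℝ) :
    IntegrableOn (fun y : ℝ => (z-y)^(t-1) * (Real.exp y + 1)⁻¹) (Set.Ioi 0) := by
  rw [minus_expand ht z]
  exact MeasureTheory.integrable_finset_sum _ (fun k _ => (w_int k).const_mul _)

lemma inversion {t : ℕ} (ht : 1 ≤ t) {z : ℝ} (hz : 0 < z) :
    negLi t (Real.exp z) + (-1:ℝ)^t * negLi t (Real.exp (-z)) =
    -2 * ∑ j ∈ Finset.range (t/2 + 1), dEta (2*j) * z^(t - 2*j) / ((t - 2*j).factorial : ℝ) := by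
  have htt : t - 1 + 1 = t := by omega
  have hfac : ((t-1).factorial : ℝ) ≠ 0 := by positivity
  have hcw : Continuous (fun y : ℝ => (y+z)^(t-1) * (Real.exp y + 1)⁻¹) :=
    ((continuous_id.add continuous_const).pow _).mul w_continuous
  have hcw' : Continuous (fun y : ℝ => (z-y)^(t-1) * (Real.exp y + 1)⁻¹) :=
    ((continuous_const.sub continuous_id).pow _).mul w_continuous
  set P := ∫ y in Set.Ioi (0:ℝ), (y+z)^(t-1) * (Real.exp y + 1)⁻¹ with hP
  set Q := ∫ y in Set.Ioi (0:ℝ), (z-y)^(t-1) * (Real.exp y + 1)⁻¹ with hQ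
  set E := ∫ y in Set.Ioc (0:ℝ) z, (z-y)^(t-1) * (Real.exp y + 1)⁻¹ with hE
  set R := ∫ y in Set.Ioi z, (z-y)^(t-1) * (Real.exp y + 1)⁻¹ with hR
  -- A-split
  have hA : negLi t (Real.exp z) = -(1/((t-1).factorial:ℝ)) * ((z^t/t - E) + P) := by
    rw [hrepr z]
    congr 1
    rw [show Set.Ioi (-z) = Set.Ioc (-z) 0 ∪ Set.Ioi 0 from (Set.Ioc_union_Ioi_eq_Ioi (by linarith)).symm,
      setIntegral_union (Set.Ioc_disjoint_Ioi le_rfl) measurableSet_Ioi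
        (hcw.integrableOn_Ioc) (plus_int ht z)]
    congr 1
    -- reflect the Ioc piece
    rw [← intervalIntegral.integral_of_le (by linarith : -z ≤ 0)]
    have hcn := intervalIntegral.integral_comp_neg (a := (0:ℝ)) (b := z)
      (fun y => (y+z)^(t-1) * (Real.exp y + 1)⁻¹)
    rw [neg_zero] at hcn
    rw [← hcn]
    have hptw : ∀ x : ℝ, (-x+z)^(t-1) * (Real.exp (-x) + 1)⁻¹
        = (z-x)^(t-1) - (z-x)^(t-1) * (Real.exp x + 1)⁻¹ := by
      intro x
      rw [w_neg, show -x+z = z-x by ring]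
      ring
    rw [intervalIntegral.integral_congr (fun x _ => hptw x)]
    have hc1 : Continuous (fun x : ℝ => (z-x)^(t-1)) := by fun_prop
    rw [intervalIntegral.integral_sub (hc1.intervalIntegrable _ _)
      (hcw'.intervalIntegrable _ _)]
    have h1 : (∫ x in (0:ℝ)..z, (z-x)^(t-1)) = z^t/t := by
      have h2 := intervalIntegral.integral_comp_sub_left (a := (0:ℝ)) (b := z)
        (fun y => y^(t-1)) z
      simp only [sub_zero, sub_self] at h2
      rw [h2, integral_pow, htt, show ((t-1:ℕ):ℝ)+1 = (t:ℝ) from by exact_mod_cast htt,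
        zero_pow (by omega : t ≠ 0), sub_zero]
    rw [h1, intervalIntegral.integral_of_le (le_of_lt hz)]
  -- B with sign
  have hB : (-1:ℝ)^t * negLi t (Real.exp (-z)) = (1/((t-1).factorial:ℝ)) * R := by
    rw [hrepr (-z), neg_neg]
    have h3 : R = (-1:ℝ)^(t-1) * ∫ y in Set.Ioi z, (y + -z)^(t-1) * (Real.exp y + 1)⁻¹ := by
      rw [← MeasureTheory.integral_const_mul]
      apply setIntegral_congr_fun measurableSet_Ioi
      intro y hy
      simp only
      rw [show z - y = -(y + -z) by ring, neg_pow]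
      ring
    have hsgn : (-1:ℝ)^t = (-1:ℝ)^(t-1) * (-1) := by
      have := pow_succ (-1:ℝ) (t-1)
      rwa [htt] at this
    rw [h3, hsgn]
    ring
  -- Q split
  have hQsplit : Q = E + R := by
    rw [hQ, show Set.Ioi (0:ℝ) = Set.Ioc 0 z ∪ Set.Ioi z from (Set.Ioc_union_Ioi_eq_Ioi hz.le).symm,
      setIntegral_union (Set.Ioc_disjoint_Ioi le_rfl) measurableSet_Ioi
        (hcw'.integrableOn_Ioc) ((minus_int ht z).mono_set (Set.Ioi_subset_Ioi hz.le))]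
  -- expansion of P - Q
  have hPQ : P - Q = ∑ k ∈ Finset.range t,
      ((t-1).choose k : ℝ) * z^(t-1-k) * (1 - (-1:ℝ)^k) * ((k.factorial : ℝ) * dEta (k+1)) := by
    have hPe : P = ∑ k ∈ Finset.range t,
        (((t-1).choose k : ℝ) * z^(t-1-k)) * ∫ y in Set.Ioi (0:ℝ), y^k * (Real.exp y + 1)⁻¹ := by
      rw [hP, plus_expand ht z, MeasureTheory.integral_finset_sum _ (fun k _ => (w_int k).const_mul _)]
      exact Finset.sum_congr rfl (fun k _ => MeasureTheory.integral_const_mul _ _)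
    have hQe : Q = ∑ k ∈ Finset.range t,
        ((-1:ℝ)^k * ((t-1).choose k : ℝ) * z^(t-1-k)) * ∫ y in Set.Ioi (0:ℝ), y^k * (Real.exp y + 1)⁻¹ := by
      rw [hQ, minus_expand ht z, MeasureTheory.integral_finset_sum _ (fun k _ => (w_int k).const_mul _)]
      exact Finset.sum_congr rfl (fun k _ => MeasureTheory.integral_const_mul _ _)
    rw [hPe, hQe, ← Finset.sum_sub_distrib]
    apply Finset.sum_congr rfl
    intro k hk
    rcases Nat.eq_zero_or_pos k with rfl | hkpos
    · norm_num
    · have hw : (∫ y in Set.Ioi (0:ℝ), y^k * (Real.exp y + 1)⁻¹) = (k.factorial : ℝ) * dEta (k+1) := by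
        rw [← eta_integral hkpos]
        exact setIntegral_congr_fun measurableSet_Ioi (fun y hy => by rw [div_eq_mul_inv])
      rw [hw]
      ring
  -- put together
  have hkey : negLi t (Real.exp z) + (-1:ℝ)^t * negLi t (Real.exp (-z))
      = -(1/((t-1).factorial:ℝ)) * (z^t/t + (P - Q)) := by
    rw [hA, hB]
    have : R = Q - E := by rw [hQsplit]; ring
    rw [this]
    ring
  rw [hkey, hPQ]
  -- final reindexing
  have hodd : ∀ i, (((t-1).choose (2*i) : ℝ) * z^(t-1-2*i) * (1 - (-1:ℝ)^(2*i))
      * (((2*i).factorial : ℝ) * dEta (2*i+1))) = 0 := by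
    intro i
    rw [pow_mul]
    norm_num
  rw [sum_odd_only t _ hodd]
  have hj0 : dEta (2*0) * z^(t - 2*0) / ((t - 2*0).factorial : ℝ) = (1/2) * (z^t / (t.factorial : ℝ)) := by
    norm_num [dEta, mul_div_assoc]
  have hzt : -(1/((t-1).factorial:ℝ)) * (z^t/t) = -2 * ((1/2) * (z^t / (t.factorial : ℝ))) := by
    rw [show t.factorial = t * (t-1).factorial from by rw [← htt, Nat.factorial_succ, htt]]
    have htne : (t:ℝ) ≠ 0 := Nat.cast_ne_zero.mpr (by omega)
    push_cast
    field_simp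
  have hterm : ∀ j ∈ Finset.range (t/2),
      -(1/((t-1).factorial:ℝ)) * (((t-1).choose (2*j+1) : ℝ) * z^(t-1-(2*j+1)) * (1 - (-1:ℝ)^(2*j+1))
        * ((((2*j+1).factorial : ℝ)) * dEta ((2*j+1)+1)))
      = -2 * (dEta (2*(j+1)) * z^(t - 2*(j+1)) / ((t - 2*(j+1)).factorial : ℝ)) := by
    intro j hj
    rw [Finset.mem_range] at hj
    have h2j : 2*j+1 ≤ t-1 := by omega
    have hch := Nat.choose_mul_factorial_mul_factorial h2j
    have hidx1 : t-1-(2*j+1) = t - 2*(j+1) := by omega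
    have hidx2 : (2*j+1)+1 = 2*(j+1) := by omega
    have hpow : (1 - (-1:ℝ)^(2*j+1)) = 2 := by
      rw [pow_succ, pow_mul]
      norm_num
    rw [hidx1, hidx2, hpow]
    have hfacc : ((t - 2*(j+1)).factorial : ℝ) ≠ 0 := by positivity
    have hc1 : ((t-1).choose (2*j+1) : ℝ) ≠ 0 :=
      Nat.cast_ne_zero.mpr (Nat.choose_pos h2j).ne'
    have hf1 : (((2*j+1).factorial : ℕ) : ℝ) ≠ 0 := by positivity
    rw [show t-1-(2*j+1) = t - 2*(j+1) from by omega] at hch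
    rw [show ((t-1).factorial : ℝ)
        = ((t-1).choose (2*j+1) : ℝ) * ((2*j+1).factorial : ℝ) * ((t - 2*(j+1)).factorial : ℝ)
      from by exact_mod_cast (congrArg (Nat.cast (R := ℝ)) hch).symm]
    field_simp
  rw [mul_add, Finset.mul_sum]
  rw [Finset.sum_congr rfl hterm, ← Finset.mul_sum, hzt]
  rw [Finset.sum_range_succ' (fun j => dEta (2*j) * z^(t - 2*j) / ((t - 2*j).factorial : ℝ)) (t/2), hj0]
  ring

lemma summable_inv_pow {s : ℕ} (hs : 2 ≤ s) : Summable (fun m : ℕ => 1/((m:ℝ)+1)^s) := by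
  exact_mod_cast (Real.summable_one_div_nat_pow.mpr hs).comp_injective
    (add_left_injective 1) |>.congr (fun m => by
      simp only [Function.comp_apply]; push_cast; ring_nf)

lemma integrableOn_neg_reflect {f : ℝ → ℝ}
    (h : IntegrableOn (fun x => f (-x)) (Set.Ioi 0)) : IntegrableOn f (Set.Iic 0) := by
  have A : MeasurableEmbedding (fun x : ℝ => -x) :=
    (Homeomorph.neg ℝ).isClosedEmbedding.measurableEmbedding
  have h0 : (Measure.map (fun x : ℝ => -x) volume).restrict (Set.Iio 0)
      = Measure.map (fun x : ℝ => -x) (volume.restrict ((fun x : ℝ => -x) ⁻¹' (Set.Iio 0))) :=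
    Measure.restrict_map A.measurable measurableSet_Iio
  rw [Measure.map_neg_eq_self] at h0
  rw [show ((fun x : ℝ => -x) ⁻¹' (Set.Iio 0)) = Set.Ioi 0 from by ext x; simp] at h0
  have h2 : IntegrableOn f (Set.Iio 0) := by
    rw [IntegrableOn, h0, A.integrable_map_iff]
    exact h
  rw [IntegrableOn, show volume.restrict (Set.Iic (0:ℝ)) = volume.restrict (Set.Iio 0) from
    (Measure.restrict_congr_set Iio_ae_eq_Iic).symm]
  exact h2

-- denominator facts

lemma den_pos (x : ℝ) : (0:ℝ) < 1 + Real.exp x := by positivity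

lemma den_one_le (x : ℝ) : (1:ℝ) ≤ 1 + Real.exp x := by
  have := Real.exp_pos x; linarith

-- integrability of x^p * negLi(e^{-qx}) on Ioi 0

lemma L1 {t p : ℕ} (ht : 1 ≤ t) {q : ℝ} (hq : 0 < q) :
    IntegrableOn (fun x : ℝ => x^p * negLi t (Real.exp (-(q*x)))) (Set.Ioi 0) := by
  refine Integrable.mono (integrable_pow_exp p hq) ?_ ?_
  · have hc : Continuous (fun x : ℝ => x^p * negLi t (Real.exp ((-q)*x))) :=
      (continuous_pow p).mul (negLi_exp_continuous t (-q))
    have : (fun x : ℝ => x^p * negLi t (Real.exp (-(q*x))))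
        = fun x : ℝ => x^p * negLi t (Real.exp ((-q)*x)) := by
      funext x; rw [neg_mul]
    rw [this]
    exact hc.aestronglyMeasurable.restrict
  · rw [ae_restrict_iff' measurableSet_Ioi]
    refine ae_of_all _ (fun x hx => ?_)
    have h0 : (0:ℝ) < x := hx
    rw [Real.norm_eq_abs, Real.norm_eq_abs, abs_mul, abs_of_nonneg (pow_nonneg h0.le _),
      abs_of_nonneg (by positivity : (0:ℝ) ≤ x^p * Real.exp (-(q*x)))]
    exact mul_le_mul_of_nonneg_left (negLi_abs_le ht (Real.exp_pos _)) (pow_nonneg h0.le _)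

lemma L2 {t p : ℕ} (ht : 1 ≤ t) {q : ℝ} (hq : 0 < q) :
    IntegrableOn (fun x : ℝ => x^p * negLi t (Real.exp (-(q*x))) / (1 + Real.exp x))
      (Set.Ioi 0) := by
  have hw : Continuous (fun x : ℝ => (1 + Real.exp x)⁻¹) :=
    Continuous.inv₀ (by fun_prop) (fun x => (den_pos x).ne')
  refine Integrable.mono (L1 ht hq (p := p)) ?_ ?_
  · have hc : Continuous (fun x : ℝ => x^p * negLi t (Real.exp ((-q)*x))) :=
      (continuous_pow p).mul (negLi_exp_continuous t (-q))
    have heq : (fun x : ℝ => x^p * negLi t (Real.exp (-(q*x))) / (1 + Real.exp x))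
        = fun x : ℝ => (x^p * negLi t (Real.exp ((-q)*x))) * (1 + Real.exp x)⁻¹ := by
      funext x; rw [neg_mul, div_eq_mul_inv]
    rw [heq]
    exact (hc.mul hw).aestronglyMeasurable.restrict
  · refine ae_of_all _ (fun x => ?_)
    rw [Real.norm_eq_abs, Real.norm_eq_abs, abs_div, abs_of_pos (den_pos x),
      div_le_iff₀ (den_pos x)]
    nlinarith [abs_nonneg (x^p * negLi t (Real.exp (-(q*x)))), den_one_le x,
      Real.exp_pos x]

lemma L4 (k : ℕ) : IntegrableOn (fun x : ℝ => x^k / (1 + Real.exp x)) (Set.Ioi 0) := by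
  have : (fun x : ℝ => x^k / (1 + Real.exp x)) = fun x : ℝ => x^k * (Real.exp x + 1)⁻¹ := by
    funext x; rw [div_eq_mul_inv, add_comm]
  rw [this]
  exact w_int k

lemma E2 {M : ℕ} (hM : 1 ≤ M) :
    ∫ x in Set.Ioi (0:ℝ), x^M / (1 + Real.exp x) = (M.factorial : ℝ) * dEta (M+1) := by
  rw [← eta_integral hM]
  exact setIntegral_congr_fun measurableSet_Ioi (fun x hx => by rw [add_comm])

lemma E1 {t p : ℕ} (ht : 1 ≤ t) {q : ℝ} (hq : 0 < q) :
    ∫ x in Set.Ioi (0:ℝ), x^p * negLi t (Real.exp (-(q*x)))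
      = -((p.factorial : ℝ)/q^(p+1)) * dEta (p+t+1) := by
  set F : ℕ → ℝ → ℝ :=
    fun m x => ((-1:ℝ)^(m+1) / ((m:ℝ)+1)^t) * (x^p * Real.exp (-((q*((m:ℝ)+1)) * x))) with hF
  have hm1 : ∀ m : ℕ, (0:ℝ) < q*((m:ℝ)+1) := fun m => by positivity
  have hFint : ∀ m : ℕ, Integrable (F m) (volume.restrict (Set.Ioi 0)) :=
    fun m => (integrable_pow_exp p (hm1 m)).const_mul _
  have hFi : ∀ m : ℕ, (∫ x in Set.Ioi (0:ℝ), F m x)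
      = ((-1:ℝ)^(m+1) / ((m:ℝ)+1)^t) * ((p.factorial : ℝ) / (q*((m:ℝ)+1))^(p+1)) := by
    intro m
    rw [hF, MeasureTheory.integral_const_mul, integral_pow_exp p (hm1 m)]
  have hnorm : ∀ m : ℕ, (∫ x in Set.Ioi (0:ℝ), ‖F m x‖)
      = (1 / ((m:ℝ)+1)^t) * ((p.factorial : ℝ) / (q*((m:ℝ)+1))^(p+1)) := by
    intro m
    rw [show (∫ x in Set.Ioi (0:ℝ), ‖F m x‖)
        = ∫ x in Set.Ioi (0:ℝ), (1 / ((m:ℝ)+1)^t) * (x^p * Real.exp (-((q*((m:ℝ)+1)) * x))) from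
      setIntegral_congr_fun measurableSet_Ioi (fun x hx => by
        have h0 : (0:ℝ) < x := hx
        have hx1 : (0:ℝ) ≤ x^p * Real.exp (-((q*((m:ℝ)+1)) * x)) := by positivity
        rw [hF, Real.norm_eq_abs, abs_mul, abs_div, abs_pow, abs_neg, abs_one, one_pow,
          abs_pow, abs_of_nonneg (by positivity : (0:ℝ) ≤ (m:ℝ)+1), abs_of_nonneg hx1])]
    rw [MeasureTheory.integral_const_mul, integral_pow_exp p (hm1 m)]
  have hsum : Summable (fun m : ℕ => ∫ x in Set.Ioi (0:ℝ), ‖F m x‖) := by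
    rw [funext hnorm]
    have h2 : Summable (fun m : ℕ => ((p.factorial : ℝ)/q^(p+1)) * (1/((m:ℝ)+1)^(p+t+1))) :=
      (summable_inv_pow (by omega)).mul_left _
    refine h2.congr (fun m => ?_)
    have hmne : ((m:ℝ)+1) ≠ 0 := by positivity
    rw [mul_pow, show ((m:ℝ)+1)^(p+t+1) = ((m:ℝ)+1)^t * ((m:ℝ)+1)^(p+1) from by
      rw [← pow_add]; congr 1; omega]
    field_simp
  have hswap := MeasureTheory.integral_tsum_of_summable_integral_norm hFint hsum
  have hptw : ∀ x ∈ Set.Ioi (0:ℝ),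
      (∑' m : ℕ, F m x) = x^p * negLi t (Real.exp (-(q*x))) := by
    intro x hx
    have h0 : (0:ℝ) < x := hx
    have hu : (0:ℝ) < Real.exp (-(q*x)) := Real.exp_pos _
    have hu1 : Real.exp (-(q*x)) < 1 := by
      rw [Real.exp_lt_one_iff]
      nlinarith
    rw [negLi_series ht hu hu1.le (Or.inl hu1), ← tsum_mul_left]
    apply tsum_congr
    intro m
    rw [hF, ← Real.exp_nat_mul]
    rw [show ((m+1:ℕ):ℝ) * (-(q*x)) = -((q*((m:ℝ)+1)) * x) by push_cast; ring]
    field_simp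
  rw [← setIntegral_congr_fun measurableSet_Ioi hptw, ← hswap, funext hFi]
  have hqne : q ≠ 0 := hq.ne'
  have heq : ∀ m : ℕ, ((-1:ℝ)^(m+1) / ((m:ℝ)+1)^t) * ((p.factorial : ℝ) / (q*((m:ℝ)+1))^(p+1))
      = (-((p.factorial : ℝ)/q^(p+1))) * ((-1:ℝ)^m / ((m:ℝ)+1)^(p+t+1)) := by
    intro m
    have hmne : ((m:ℝ)+1) ≠ 0 := by positivity
    rw [mul_pow, pow_succ, show p+t+1 = t + (p+1) by omega, pow_add]
    field_simp
    ring
  rw [funext heq, tsum_mul_left, dEta_eq (by omega)]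

lemma mainJ {t p : ℕ} (ht : 1 ≤ t) {q : ℝ} (hq : 0 < q) (hodd : Odd (p + t)) :
    (1/(p.factorial : ℝ)) * ∫ x : ℝ, x^p * negLi t (Real.exp (q*x)) / (1 + Real.exp x) =
    ((-1:ℝ)^(p+1) / q^(p+1)) * dEta (p+t+1)
      - 2 * ∑ j ∈ Finset.range (t/2 + 1),
          q^(t-2*j) * ((p+t-2*j).choose p : ℝ) * dEta (p+t+1-2*j) * dEta (2*j) := by
  set f : ℝ → ℝ := fun x => x^p * negLi t (Real.exp (q*x)) / (1 + Real.exp x) with hf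
  set C := ∫ x in Set.Ioi (0:ℝ), x^p * negLi t (Real.exp (-(q*x))) / (1 + Real.exp x) with hC
  set D := ∫ x in Set.Ioi (0:ℝ), x^p * negLi t (Real.exp (-(q*x))) with hD
  -- the function g equal to f on Ioi 0 via inversion
  set g : ℝ → ℝ := fun x =>
    (-(-1:ℝ)^t) * (x^p * negLi t (Real.exp (-(q*x))) / (1 + Real.exp x))
    + ∑ j ∈ Finset.range (t/2 + 1),
        (-2 * dEta (2*j) * q^(t-2*j) / ((t-2*j).factorial : ℝ)) * (x^(p+(t-2*j)) / (1 + Real.exp x))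
    with hg
  have hfg : ∀ x ∈ Set.Ioi (0:ℝ), f x = g x := by
    intro x hx
    have h0 : (0:ℝ) < x := hx
    have hz : (0:ℝ) < q*x := by positivity
    have hinv := inversion ht hz
    have hLi : negLi t (Real.exp (q*x))
        = -2 * (∑ j ∈ Finset.range (t/2 + 1),
            dEta (2*j) * (q*x)^(t - 2*j) / ((t - 2*j).factorial : ℝ))
          - (-1:ℝ)^t * negLi t (Real.exp (-(q*x))) := by linarith
    have hsum_eq : ∑ j ∈ Finset.range (t/2+1),
        (-2 * dEta (2*j) * q^(t-2*j) / ((t-2*j).factorial : ℝ)) * (x^(p+(t-2*j)) / (1 + Real.exp x))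
      = (x^p * (-2 * ∑ j ∈ Finset.range (t/2 + 1),
          dEta (2*j) * (q*x)^(t - 2*j) / ((t - 2*j).factorial : ℝ))) / (1 + Real.exp x) := by
      rw [Finset.mul_sum, Finset.mul_sum, Finset.sum_div]
      apply Finset.sum_congr rfl
      intro j hj
      rw [mul_pow, pow_add, div_eq_mul_inv, div_eq_mul_inv, div_eq_mul_inv, div_eq_mul_inv]
      ring
    rw [hf, hg]
    simp only
    rw [hLi, hsum_eq, div_eq_mul_inv, div_eq_mul_inv, div_eq_mul_inv]
    ring
  have hIoi_int : IntegrableOn f (Set.Ioi 0) := by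
    apply (IntegrableOn.congr_fun _ (fun x hx => (hfg x hx).symm) measurableSet_Ioi)
    apply Integrable.add
    · exact (L2 ht hq).const_mul _
    · exact MeasureTheory.integrable_finset_sum _ (fun j _ => (L4 _).const_mul _)
  have hIoi : ∫ x in Set.Ioi (0:ℝ), f x
      = (-(-1:ℝ)^t) * C + ∑ j ∈ Finset.range (t/2 + 1),
          (-2 * dEta (2*j) * q^(t-2*j) / ((t-2*j).factorial : ℝ))
            * (((p+(t-2*j)).factorial : ℝ) * dEta ((p+(t-2*j))+1)) := by
    rw [setIntegral_congr_fun measurableSet_Ioi hfg, hg]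
    rw [MeasureTheory.integral_add ((L2 ht hq).const_mul _)
      (MeasureTheory.integrable_finset_sum _ (fun j _ => (L4 _).const_mul _))]
    congr 1
    · rw [MeasureTheory.integral_const_mul]
    · rw [MeasureTheory.integral_finset_sum _ (fun j _ => (L4 _).const_mul _)]
      apply Finset.sum_congr rfl
      intro j hj
      rw [Finset.mem_range] at hj
      obtain ⟨w, hw⟩ := hodd
      rw [MeasureTheory.integral_const_mul, E2 (by omega : 1 ≤ p+(t-2*j))]
  -- Iic part by reflection
  have hrefl : ∀ x ∈ Set.Ioi (0:ℝ), f (-x)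
      = ((-1:ℝ)^p) * (x^p * negLi t (Real.exp (-(q*x))))
        - ((-1:ℝ)^p) * (x^p * negLi t (Real.exp (-(q*x))) / (1 + Real.exp x)) := by
    intro x hx
    rw [hf]
    simp only
    have hd1 : (0:ℝ) < 1 + Real.exp (-x) := den_pos (-x)
    have hd2 : (0:ℝ) < 1 + Real.exp x := den_pos x
    rw [show q * (-x) = -(q*x) by ring, neg_pow, div_eq_mul_inv,
      show (1 + Real.exp (-x))⁻¹ = 1 - (1 + Real.exp x)⁻¹ from by
        rw [add_comm 1 (Real.exp (-x)), add_comm 1 (Real.exp x)]; exact w_neg x,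
      div_eq_mul_inv]
    ring
  have hIic_int : IntegrableOn f (Set.Iic 0) := by
    apply integrableOn_neg_reflect
    apply (IntegrableOn.congr_fun _ (fun x hx => (hrefl x hx).symm) measurableSet_Ioi)
    exact ((L1 ht hq).const_mul _).sub ((L2 ht hq).const_mul _)
  have hIic : ∫ x in Set.Iic (0:ℝ), f x = ((-1:ℝ)^p) * D - ((-1:ℝ)^p) * C := by
    have hcn := integral_comp_neg_Ioi (0:ℝ) f
    rw [neg_zero] at hcn
    rw [← hcn, setIntegral_congr_fun measurableSet_Ioi hrefl,
      MeasureTheory.integral_sub ((L1 ht hq).const_mul _) ((L2 ht hq).const_mul _),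
      MeasureTheory.integral_const_mul, MeasureTheory.integral_const_mul]
  have hsplit : ∫ x : ℝ, f x = (∫ x in Set.Iic (0:ℝ), f x) + ∫ x in Set.Ioi (0:ℝ), f x :=
    (intervalIntegral.integral_Iic_add_Ioi hIic_int hIoi_int).symm
  have hsign : (-1:ℝ)^p = -(-1:ℝ)^t := by
    obtain ⟨w, hw⟩ := hodd
    rcases Nat.even_or_odd p with hp | hp
    · obtain ⟨i, hi⟩ := hp
      have htodd : Odd t := ⟨w - i, by omega⟩
      rw [Even.neg_one_pow ⟨i, hi⟩, Odd.neg_one_pow htodd]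
      norm_num
    · obtain ⟨i, hi⟩ := hp
      have hteven : Even t := ⟨w - i, by omega⟩
      rw [Odd.neg_one_pow ⟨i, hi⟩, Even.neg_one_pow hteven]
  have htotal : ∫ x : ℝ, f x = ((-1:ℝ)^p) * D
      + ∑ j ∈ Finset.range (t/2 + 1),
          (-2 * dEta (2*j) * q^(t-2*j) / ((t-2*j).factorial : ℝ))
            * (((p+(t-2*j)).factorial : ℝ) * dEta ((p+(t-2*j))+1)) := by
    rw [hsplit, hIic, hIoi, hsign]
    ring
  have hterm2 : ∀ j ∈ Finset.range (t/2 + 1),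
      (-2 * dEta (2*j) * q^(t-2*j) / ((t-2*j).factorial : ℝ))
        * (((p+(t-2*j)).factorial : ℝ) * dEta ((p+(t-2*j))+1))
      = ((p.factorial : ℝ) * (-2))
          * (q^(t-2*j) * ((p+t-2*j).choose p : ℝ) * dEta (p+t+1-2*j) * dEta (2*j)) := by
    intro j hj
    rw [Finset.mem_range] at hj
    have h2j : 2*j ≤ t := by omega
    have hi1 : p+t-2*j = p+(t-2*j) := by omega
    have hi2 : p+t+1-2*j = (p+(t-2*j))+1 := by omega
    rw [hi1, hi2]
    have hch : (p+(t-2*j)).choose p * (p.factorial * (t-2*j).factorial)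
        = (p+(t-2*j)).factorial := by
      have h := Nat.choose_mul_factorial_mul_factorial (show p ≤ p+(t-2*j) from by omega)
      rw [show p+(t-2*j)-p = t-2*j from by omega] at h
      rw [← h]; ring
    have hcast : ((p+(t-2*j)).factorial : ℝ)
        = ((p+(t-2*j)).choose p : ℝ) * ((p.factorial : ℝ) * ((t-2*j).factorial : ℝ)) := by
      exact_mod_cast hch.symm
    rw [hcast]
    have hfj : ((t-2*j).factorial : ℝ) ≠ 0 := by positivity
    field_simp
  rw [htotal, hD, E1 ht hq, Finset.sum_congr rfl hterm2, ← Finset.mul_sum]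
  have hpfac : ((p.factorial : ℕ) : ℝ) ≠ 0 := by positivity
  have hqne : q ≠ 0 := hq.ne'
  rw [pow_succ]
  field_simp
  ring

theorem stmt0 (t p : ℕ) (ht : 1 ≤ t) (a b : ℝ) (hab : a * b > 0)
    (hodd : Odd (p + t)) :
    (Real.sign b / (p.factorial : ℝ)) * b^(p+1) *
      (∫ x : ℝ, x^p * negLi t (Real.exp (a*x)) / (1 + Real.exp (b*x))) =
    ((-1:ℝ)^(p+1) / (a/b)^(p+1)) * dEta (p+t+1)
      - 2 * ∑ j ∈ Finset.range (t/2 + 1),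
          (a/b)^(t-2*j) * ((p+t-2*j).choose p : ℝ) * dEta (p+t+1-2*j) * dEta (2*j) := by
  have hb : b ≠ 0 := by
    rintro rfl
    rw [mul_zero] at hab
    exact lt_irrefl 0 hab
  have hq : 0 < a/b := by
    rcases mul_pos_iff.mp hab with ⟨ha, hb'⟩ | ⟨ha, hb'⟩
    · exact div_pos ha hb'
    · exact div_pos_of_neg_of_neg ha hb'
  set q := a/b with hqdef
  set J := ∫ y : ℝ, y^p * negLi t (Real.exp (q*y)) / (1 + Real.exp y) with hJ
  have hcv : (∫ x : ℝ, x^p * negLi t (Real.exp (a*x)) / (1 + Real.exp (b*x)))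
      = |b⁻¹| * ((b⁻¹)^p * J) := by
    have h1 : (fun x : ℝ => x^p * negLi t (Real.exp (a*x)) / (1 + Real.exp (b*x)))
        = fun x : ℝ => (fun y => (b⁻¹)^p * (y^p * negLi t (Real.exp (q*y)) / (1 + Real.exp y))) (b*x) := by
      funext x
      simp only
      rw [show q * (b*x) = a * x from by rw [hqdef]; field_simp, mul_pow,
        div_eq_mul_inv, div_eq_mul_inv, inv_pow]
      field_simp
    rw [h1, MeasureTheory.Measure.integral_comp_mul_left
      (fun y => (b⁻¹)^p * (y^p * negLi t (Real.exp (q*y)) / (1 + Real.exp y))) b,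
      MeasureTheory.integral_const_mul, smul_eq_mul, hJ]
  have hinv : b⁻¹ * (b⁻¹)^p = (b^(p+1))⁻¹ := by
    rw [inv_pow, ← mul_inv, ← pow_succ']
  have hcoef : Real.sign b * (b^(p+1) * (|b⁻¹| * (b⁻¹)^p)) = 1 := by
    rcases mul_pos_iff.mp hab with ⟨ha, hb'⟩ | ⟨ha, hb'⟩
    · rw [Real.sign_of_pos hb', abs_of_pos (inv_pos.mpr hb')]
      rw [show b^(p+1) * (b⁻¹ * (b⁻¹)^p) = b^(p+1) * (b^(p+1))⁻¹ from by rw [hinv],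
        mul_inv_cancel₀ (pow_ne_zero _ hb), one_mul]
    · rw [Real.sign_of_neg hb', abs_of_neg (inv_neg''.mpr hb')]
      rw [show b^(p+1) * (-b⁻¹ * (b⁻¹)^p) = -(b^(p+1) * (b^(p+1))⁻¹) from by rw [← hinv]; ring,
        mul_inv_cancel₀ (pow_ne_zero _ hb)]
      ring
  rw [hcv]
  calc (Real.sign b / (p.factorial : ℝ)) * b^(p+1) * (|b⁻¹| * ((b⁻¹)^p * J))
      = (Real.sign b * (b^(p+1) * (|b⁻¹| * (b⁻¹)^p))) * ((1/(p.factorial : ℝ)) * J) := by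
        ring
    _ = (1/(p.factorial : ℝ)) * J := by rw [hcoef, one_mul]
    _ = _ := mainJ ht hq hodd
end

section
/- For every integer t ≥ 1, ∫_{−∞}^{∞} Li_t(−e^{x})/(1 + e^{x}) dx = −t·ζ(t+1), where ζ is the Riemann zeta function. -/
open MeasureTheory Filter Set Real Topology

lemma lemA (n : ℕ) {b : ℝ} (hb : 0 < b) :
    IntegrableOn (fun s : ℝ => s^n * Real.exp (-(b*s))) (Set.Ioi 0) := by
  apply integrable_of_isBigO_exp_neg (half_pos hb) (by fun_prop)
  have htend : Tendsto (fun s : ℝ => s^n * Real.exp (-((b/2)*s))) atTop (𝓝 0) := by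
    have h1 := (tendsto_pow_mul_exp_neg_atTop_nhds_zero n).comp
      (tendsto_id.const_mul_atTop (half_pos hb))
    have h2 := h1.const_mul ((2/b)^n)
    rw [mul_zero] at h2
    refine h2.congr (fun s => ?_)
    simp only [Function.comp, id]
    rw [← mul_assoc, ← mul_pow]
    congr 2
    field_simp
  apply Asymptotics.IsLittleO.isBigO
  rw [Asymptotics.isLittleO_iff_tendsto' (by filter_upwards with x h using absurd h (Real.exp_ne_zero _))]
  refine htend.congr (fun s => ?_)
  rw [mul_div_assoc, ← Real.exp_sub]
  ring_nf

lemma lemB (n : ℕ) {b : ℝ} (hb : 0 < b) :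
    ∫ s in Set.Ioi (0:ℝ), s^n * Real.exp (-(b*s)) = (n.factorial : ℝ) / b^(n+1) := by
  have h := Real.integral_rpow_mul_exp_neg_mul_Ioi (a := (n:ℝ)+1) (by positivity) hb
  rw [setIntegral_congr_fun measurableSet_Ioi
    (fun s (hs : s ∈ Set.Ioi (0:ℝ)) => by
      rw [show ((n:ℝ)+1-1) = (n:ℝ) by ring, Real.rpow_natCast])] at h
  rw [h, Real.Gamma_nat_eq_factorial, show ((n:ℝ)+1) = ((n+1:ℕ):ℝ) by push_cast; ring,
    Real.rpow_natCast, div_pow, one_pow]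
  ring

lemma lemC {c : ℝ} (hc : 1 ≤ c) :
    Integrable (fun x : ℝ => Real.exp x / ((c + Real.exp x) * (1 + Real.exp x))) := by
  have hmeas : AEStronglyMeasurable (fun x : ℝ => Real.exp x / ((c + Real.exp x) * (1 + Real.exp x))) volume := by
    apply Continuous.aestronglyMeasurable; fun_prop (disch := intros; positivity)
  have h1 : IntegrableOn (fun x : ℝ => Real.exp x / ((c + Real.exp x) * (1 + Real.exp x))) (Iic 0) := by
    refine Integrable.mono' (integrableOn_exp_Iic 0) hmeas.restrict ?_
    filter_upwards with x
    have h2 : (0:ℝ) < c + Real.exp x := by positivity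
    have h3 : (0:ℝ) < 1 + Real.exp x := by positivity
    rw [Real.norm_of_nonneg (by positivity)]
    rw [div_le_iff₀ (by positivity)]
    nlinarith [Real.exp_pos x, hc, sq_nonneg (Real.exp x)]
  have h2 : IntegrableOn (fun x : ℝ => Real.exp x / ((c + Real.exp x) * (1 + Real.exp x))) (Ioi 0) := by
    refine Integrable.mono' (exp_neg_integrableOn_Ioi 0 one_pos) hmeas.restrict ?_
    filter_upwards with x
    have h2 : (0:ℝ) < c + Real.exp x := by positivity
    rw [Real.norm_of_nonneg (by positivity), neg_one_mul, Real.exp_neg,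
      div_le_iff₀ (by positivity), inv_mul_eq_div, le_div_iff₀ (Real.exp_pos x)]
    nlinarith [Real.exp_pos x, hc.trans_lt (lt_add_of_pos_right c (Real.exp_pos x))]
  have h3 := h1.union h2
  rw [Set.Iic_union_Ioi] at h3
  exact integrableOn_univ.mp h3

lemma lemD {c : ℝ} (hc : 1 < c) :
    ∫ x : ℝ, Real.exp x / ((c + Real.exp x) * (1 + Real.exp x)) = Real.log c / (c - 1) := by
  have hc0 : (0:ℝ) < c := lt_trans one_pos hc
  have hc1 : c - 1 ≠ 0 := by linarith
  set F : ℝ → ℝ := fun x => (c-1)⁻¹ * (Real.log (1 + Real.exp x) - Real.log (c + Real.exp x)) with hF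
  have hderiv : ∀ x, HasDerivAt F (Real.exp x / ((c + Real.exp x) * (1 + Real.exp x))) x := by
    intro x
    have he := Real.hasDerivAt_exp x
    have d1 : HasDerivAt (fun x => Real.log (1 + Real.exp x)) (Real.exp x / (1 + Real.exp x)) x := by
      simpa using ((hasDerivAt_const x (1:ℝ)).add he).log (by show (1:ℝ) + Real.exp x ≠ 0; positivity)
    have d2 : HasDerivAt (fun x => Real.log (c + Real.exp x)) (Real.exp x / (c + Real.exp x)) x := by
      simpa using ((hasDerivAt_const x c).add he).log (by show c + Real.exp x ≠ 0; positivity)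
    have := ((d1.sub d2).const_mul ((c-1)⁻¹))
    refine this.congr_deriv ?_
    have e1 : (0:ℝ) < 1 + Real.exp x := by positivity
    have e2 : (0:ℝ) < c + Real.exp x := by positivity
    field_simp
    ring
  have hbot : Tendsto F atBot (𝓝 ((c-1)⁻¹ * (0 - Real.log c))) := by
    refine Tendsto.const_mul _ (Tendsto.sub ?_ ?_)
    · have : Tendsto (fun x : ℝ => 1 + Real.exp x) atBot (𝓝 1) := by
        simpa using tendsto_const_nhds.add Real.tendsto_exp_atBot
      simpa [Function.comp_def] using ((Real.continuousAt_log one_ne_zero).tendsto.comp this)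
    · have : Tendsto (fun x : ℝ => c + Real.exp x) atBot (𝓝 c) := by
        simpa using tendsto_const_nhds.add Real.tendsto_exp_atBot
      exact (Real.continuousAt_log (ne_of_gt hc0)).tendsto.comp this
  have htop : Tendsto F atTop (𝓝 0) := by
    have hratio : Tendsto (fun x : ℝ => (1 + Real.exp x) / (c + Real.exp x)) atTop (𝓝 1) := by
      have h0 : Tendsto (fun x : ℝ => Real.exp (-x)) atTop (𝓝 0) := by
        simpa using Real.tendsto_exp_comp_nhds_zero.mpr (tendsto_neg_atTop_atBot)
      have h1 : Tendsto (fun x : ℝ => (Real.exp (-x) + 1) / (c * Real.exp (-x) + 1)) atTop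
          (𝓝 ((0 + 1) / (c * 0 + 1))) := by
        apply Tendsto.div (h0.add tendsto_const_nhds) ((h0.const_mul c).add tendsto_const_nhds)
        norm_num
      norm_num at h1
      refine h1.congr (fun x => ?_)
      have hx := Real.exp_pos x
      rw [Real.exp_neg]
      field_simp
    have hlog : Tendsto (fun x : ℝ => Real.log ((1 + Real.exp x) / (c + Real.exp x))) atTop (𝓝 0) := by
      simpa [Function.comp_def] using (Real.continuousAt_log one_ne_zero).tendsto.comp hratio
    have : Tendsto F atTop (𝓝 ((c-1)⁻¹ * 0)) := by
      refine Tendsto.const_mul _ (hlog.congr (fun x => ?_))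
      rw [Real.log_div (by positivity) (by positivity)]
    simpa using this
  have := integral_of_hasDerivAt_of_tendsto hderiv (lemC hc.le) hbot htop
  rw [this]
  field_simp
  ring

-- summability
lemma sumz (q : ℕ) (hq : 1 < q) : Summable (fun n : ℕ => 1 / ((n:ℝ)+1)^q) := by
  have h := summable_one_div_nat_pow.mpr hq
  have h2 := (summable_nat_add_iff 1).mpr h
  refine h2.congr (fun n => ?_)
  push_cast
  ring_nf


theorem stmt5 (t : ℕ) (ht : 1 ≤ t) :
    (∫ x : ℝ, negLi t (Real.exp x) / (1 + Real.exp x)) = -(t : ℝ) * rZeta (t+1) := by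
  obtain ⟨p, rfl⟩ : ∃ p, t = p + 1 := ⟨t - 1, (Nat.succ_pred_eq_of_pos ht).symm⟩
  set g : ℝ → ℝ → ℝ :=
    fun x s => s^p * Real.exp x / ((Real.exp s + Real.exp x) * (1 + Real.exp x)) with hg
  have hgcont : Continuous (fun q : ℝ × ℝ => g q.1 q.2) := by
    apply Continuous.div (by fun_prop) (by fun_prop)
    intro q; positivity
  have hgcont1 : ∀ x, Continuous (g x) := fun x =>
    hgcont.comp (continuous_const.prodMk continuous_id)
  -- step: pointwise identity for the outer integrand
  have key1 : ∀ x : ℝ, negLi (p+1) (Real.exp x) / (1 + Real.exp x)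
      = -(p.factorial:ℝ)⁻¹ * ∫ s in Ioi (0:ℝ), g x s := by
    intro x
    rw [negLi]
    simp only [Nat.add_sub_cancel, one_div]
    rw [neg_mul, neg_div, mul_div_assoc, ← integral_div, ← neg_mul]
    congr 1
    refine setIntegral_congr_fun measurableSet_Ioi (fun s _ => ?_)
    have h1 := Real.exp_pos x
    have h2 := Real.exp_pos s
    have h3 : (0:ℝ) < 1 + Real.exp x := by positivity
    have h4 : (Real.exp x)⁻¹ * Real.exp s + 1 > 0 := by positivity
    simp only [hg]
    rw [div_div, div_eq_div_iff (by positivity) (by positivity)]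
    field_simp
  simp_rw [key1]
  rw [integral_const_mul _ _]
  -- slice integrability in s
  have slice_int : ∀ x : ℝ, IntegrableOn (g x) (Ioi 0) := by
    intro x
    refine Integrable.mono' ((lemA p (b := 1) one_pos).const_mul (Real.exp x))
      (hgcont1 x).aestronglyMeasurable.restrict ?_
    rw [ae_restrict_iff' measurableSet_Ioi]
    filter_upwards with s hs
    have hs0 : (0:ℝ) < s := hs
    have h1 := Real.exp_pos x
    have h2 := Real.exp_pos s
    rw [Real.norm_of_nonneg (by simp only [hg]; positivity)]
    simp only [hg]
    calc s^p * Real.exp x / ((Real.exp s + Real.exp x) * (1 + Real.exp x))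
        ≤ s^p * Real.exp x / (Real.exp s * 1) := by
          apply div_le_div_of_nonneg_left (by positivity) (by positivity)
          nlinarith
      _ = Real.exp x * (s^p * Real.exp (-(1*s))) := by
          rw [one_mul, Real.exp_neg, mul_one, div_eq_mul_inv]; ring
  -- main computation via lintegrals
  have hGmeas : Measurable (Function.uncurry fun x s => ENNReal.ofReal (g x s)) :=
    ENNReal.measurable_ofReal.comp hgcont.measurable
  have fin : ∀ x, (∫⁻ s in Ioi (0:ℝ), ENNReal.ofReal (g x s)) < ⊤ := by
    intro x
    exact lt_of_le_of_lt (lintegral_ofReal_le_lintegral_enorm _) (slice_int x).2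
  have step1 : ∀ x : ℝ, (∫ s in Ioi (0:ℝ), g x s)
      = (∫⁻ s in Ioi (0:ℝ), ENNReal.ofReal (g x s)).toReal := by
    intro x
    rw [integral_eq_lintegral_of_nonneg_ae]
    · filter_upwards [ae_restrict_mem measurableSet_Ioi] with s hs
      have hs0 : (0:ℝ) < s := hs
      simp only [hg, Pi.zero_apply]; positivity
    · exact (hgcont1 x).aestronglyMeasurable.restrict
  have main : (∫ x : ℝ, ∫ s in Ioi (0:ℝ), g x s) = ((p+1).factorial : ℝ) * rZeta (p+2) := by
    simp_rw [step1]
    rw [integral_toReal (Measurable.lintegral_prod_right hGmeas).aemeasurable (ae_of_all _ fin)]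
    rw [lintegral_lintegral_swap hGmeas.aemeasurable]
    have inner : ∀ s ∈ Ioi (0:ℝ), (∫⁻ x : ℝ, ENNReal.ofReal (g x s))
        = ENNReal.ofReal (s^(p+1) / (Real.exp s - 1)) := by
      intro s hs
      have hs0 : (0:ℝ) < s := hs
      have hes : 1 < Real.exp s := by
        rw [← Real.exp_zero]; exact Real.exp_lt_exp.mpr hs0
      have hint : Integrable (fun x : ℝ => g x s) := by
        have := (lemC hes.le).const_mul (s^p)
        refine this.congr (ae_of_all _ (fun x => ?_))
        simp only [hg]; ring
      rw [← ofReal_integral_eq_lintegral_ofReal hint]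
      · congr 1
        have : (∫ x : ℝ, g x s)
            = s^p * ∫ x : ℝ, Real.exp x / ((Real.exp s + Real.exp x) * (1 + Real.exp x)) := by
          rw [← integral_const_mul _ _]
          refine integral_congr_ae (ae_of_all _ (fun x => ?_))
          simp only [hg]; ring
        rw [this, lemD hes, Real.log_exp, pow_succ]
        ring
      · filter_upwards with x
        have h1 := Real.exp_pos x
        have h2 := Real.exp_pos s
        simp only [hg]; positivity
    rw [setLIntegral_congr_fun measurableSet_Ioi inner]
    have expand : ∀ s ∈ Ioi (0:ℝ), ENNReal.ofReal (s^(p+1) / (Real.exp s - 1))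
        = ∑' n : ℕ, ENNReal.ofReal (s^(p+1) * Real.exp (-(((n:ℝ)+1) * s))) := by
      intro s hs
      have hs0 : (0:ℝ) < s := hs
      have hlt : Real.exp (-s) < 1 := by
        rw [Real.exp_lt_one_iff]; linarith
      have hge := (hasSum_geometric_of_lt_one (Real.exp_pos (-s)).le hlt).mul_left
        (s^(p+1) * Real.exp (-s))
      have hsum : HasSum (fun n : ℕ => s^(p+1) * Real.exp (-(((n:ℝ)+1) * s)))
          (s^(p+1) / (Real.exp s - 1)) := by
        have hne : 1 - Real.exp (-s) ≠ 0 := by linarith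
        have hne2 : Real.exp s - 1 ≠ 0 := by
          have : 1 < Real.exp s := by rw [← Real.exp_zero]; exact Real.exp_lt_exp.mpr hs0
          linarith
        have hfun : (fun n : ℕ => s^(p+1) * Real.exp (-(((n:ℝ)+1) * s)))
            = fun n => s^(p+1) * Real.exp (-s) * Real.exp (-s)^n := by
          funext n
          rw [show -(((n:ℝ)+1) * s) = (-s) + (n:ℝ) * (-s) by ring, Real.exp_add]
          rw [show ((n:ℝ) * (-s)) = ((n:ℕ):ℝ) * (-s) by norm_num, Real.exp_nat_mul]
          ring
        have hval : s ^ (p + 1) * Real.exp (-s) * (1 - Real.exp (-s))⁻¹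
            = s^(p+1) / (Real.exp s - 1) := by
          have hne' : 1 - (Real.exp s)⁻¹ ≠ 0 := by rw [← Real.exp_neg]; exact hne
          rw [Real.exp_neg]
          field_simp
        rw [hfun, ← hval]
        exact hge
      rw [hsum.tsum_eq.symm]
      refine ENNReal.ofReal_tsum_of_nonneg (fun n => by positivity) hsum.summable
    rw [setLIntegral_congr_fun measurableSet_Ioi expand]
    rw [lintegral_tsum (fun n => by
      apply Measurable.aemeasurable
      apply ENNReal.measurable_ofReal.comp
      fun_prop)]
    have term : ∀ n : ℕ, (∫⁻ s in Ioi (0:ℝ), ENNReal.ofReal (s^(p+1) * Real.exp (-(((n:ℝ)+1) * s))))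
        = ENNReal.ofReal (((p+1).factorial : ℝ) / ((n:ℝ)+1)^(p+2)) := by
      intro n
      have hb : (0:ℝ) < (n:ℝ)+1 := by positivity
      rw [← ofReal_integral_eq_lintegral_ofReal (lemA (p+1) hb)]
      · rw [lemB (p+1) hb]
      · filter_upwards [ae_restrict_mem measurableSet_Ioi] with s hs
        have hs0 : (0:ℝ) < s := hs
        simp only [Pi.zero_apply]
        positivity
    rw [tsum_congr term]
    have hsummz := sumz (p+2) (by omega)
    have hsum2 : Summable (fun n : ℕ => ((p+1).factorial : ℝ) / ((n:ℝ)+1)^(p+2)) := by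
      refine (hsummz.mul_left ((p+1).factorial : ℝ)).congr (fun n => ?_)
      rw [mul_one_div]
    rw [← ENNReal.ofReal_tsum_of_nonneg (fun n => by positivity) hsum2]
    have : (∑' n : ℕ, ((p+1).factorial : ℝ) / ((n:ℝ)+1)^(p+2))
        = ((p+1).factorial : ℝ) * rZeta (p+2) := by
      rw [rZeta, ← tsum_mul_left]
      exact tsum_congr (fun n => by rw [mul_one_div])
    rw [this, ENNReal.toReal_ofReal]
    have hz : 0 ≤ rZeta (p+2) := tsum_nonneg (fun n => by positivity)
    positivity
  rw [main]
  have hfact : ((p+1).factorial : ℝ) = ((p:ℝ)+1) * (p.factorial : ℝ) := by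
    rw [Nat.factorial_succ]; push_cast; ring
  have hpf : (p.factorial : ℝ) ≠ 0 := Nat.cast_ne_zero.mpr p.factorial_ne_zero
  rw [hfact]
  push_cast
  field_simp
end

section
/- Let p ∈ ℕ (possibly 0) and a, b ∈ ℝ with ab > 0; set q = a/b. Then sign(b)·b^{2p+1}·∫_{−∞}^{∞} x^{2p} · (−log(1 + e^{ax}))/(1 + e^{bx}) dx = −[ (2p)!/q^{2p+1} + q·(2p+1)! ]·η(2p+2), where log is the real natural logarithm. -/
open MeasureTheory Filter

open Set Real

-- basic integrability / integral of pow * exp on Ioi 0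
lemma intOn_pow_exp (k : ℕ) {c : ℝ} (hc : 0 < c) :
    IntegrableOn (fun x : ℝ => x ^ k * Real.exp (-(c * x))) (Set.Ioi 0) := by
  have h := integrableOn_rpow_mul_exp_neg_mul_rpow (s := (k : ℝ)) (p := 1) (b := c)
    (lt_of_lt_of_le neg_one_lt_zero (Nat.cast_nonneg k)) zero_lt_one hc
  refine h.congr_fun (fun x hx => ?_) measurableSet_Ioi
  dsimp only
  rw [Real.rpow_natCast, Real.rpow_one, neg_mul]

lemma int_pow_exp (k : ℕ) {c : ℝ} (hc : 0 < c) :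
    ∫ x in Set.Ioi (0:ℝ), x ^ k * Real.exp (-(c * x)) = (k.factorial : ℝ) / c ^ (k + 1) := by
  have h := integral_rpow_mul_exp_neg_mul_Ioi (a := (k : ℝ) + 1) (r := c) (by positivity) hc
  have e1 : ∀ x ∈ Set.Ioi (0:ℝ), x ^ ((k:ℝ) + 1 - 1) * Real.exp (-(c * x))
      = x ^ k * Real.exp (-(c * x)) := by
    intro x hx
    rw [add_sub_cancel_right, Real.rpow_natCast]
  rw [setIntegral_congr_fun measurableSet_Ioi e1] at h
  rw [h, Real.Gamma_nat_eq_factorial, show ((k:ℝ) + 1) = ((k + 1 : ℕ) : ℝ) by push_cast; ring,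
    Real.rpow_natCast]
  field_simp
  rw [← mul_pow, one_div, inv_mul_cancel₀ hc.ne', one_pow]

lemma summable_base {t : ℕ} (ht : 2 ≤ t) : Summable (fun n : ℕ => 1 / ((n:ℝ) + 1) ^ t) := by
  have h := Real.summable_one_div_nat_pow.mpr ht
  have h2 := (summable_nat_add_iff (f := fun n : ℕ => 1 / (n:ℝ) ^ t) 1).mpr h
  refine h2.congr (fun n => ?_)
  push_cast
  ring_nf

-- the inner series, with coefficient exponent e (e = 1 : log case, e = 0 : Fermi case)
noncomputable def Ser (e : ℕ) (c x : ℝ) : ℝ :=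
  ∑' n : ℕ, (-1:ℝ)^n * Real.exp (-((((n:ℝ) + 1) * c) * x)) / ((n:ℝ) + 1) ^ e

lemma engine (k e : ℕ) (hke : 1 ≤ k + e) {c : ℝ} (hc : 0 < c) :
    ∫ x in Set.Ioi (0:ℝ), x ^ k * Ser e c x
      = ((k.factorial : ℝ) / c ^ (k + 1)) * ∑' n : ℕ, (-1:ℝ)^n / ((n:ℝ) + 1) ^ (k + 1 + e) := by
  set μ := (volume : Measure ℝ).restrict (Set.Ioi 0)
  set F : ℕ → ℝ → ℝ := fun n x =>
    x ^ k * ((-1:ℝ)^n * Real.exp (-((((n:ℝ) + 1) * c) * x)) / ((n:ℝ) + 1) ^ e) with hF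
  have hnc : ∀ n : ℕ, (0:ℝ) < ((n:ℝ) + 1) * c := fun n => by positivity
  have hint : ∀ n : ℕ, Integrable (F n) μ := by
    intro n
    have h := (intOn_pow_exp k (hnc n)).const_mul ((-1:ℝ)^n / ((n:ℝ) + 1) ^ e)
    refine IntegrableOn.congr_fun h (fun x _ => ?_) measurableSet_Ioi
    simp only [F]
    ring
  have hFval : ∀ n : ℕ, ∫ x, F n x ∂μ
      = ((-1:ℝ)^n / ((n:ℝ) + 1) ^ e) * ((k.factorial : ℝ) / (((n:ℝ) + 1) * c) ^ (k + 1)) := by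
    intro n
    have : ∀ x : ℝ, F n x = ((-1:ℝ)^n / ((n:ℝ) + 1) ^ e) * (x ^ k * Real.exp (-((((n:ℝ) + 1) * c) * x))) := by
      intro x; simp only [F]; ring
    simp only [this]
    rw [MeasureTheory.integral_const_mul, int_pow_exp k (hnc n)]
  have hnorm : ∀ n : ℕ, ∫ x, ‖F n x‖ ∂μ
      = (1 / ((n:ℝ) + 1) ^ e) * ((k.factorial : ℝ) / (((n:ℝ) + 1) * c) ^ (k + 1)) := by
    intro n
    have he : ∀ x ∈ Set.Ioi (0:ℝ), ‖F n x‖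
        = (1 / ((n:ℝ) + 1) ^ e) * (x ^ k * Real.exp (-((((n:ℝ) + 1) * c) * x))) := by
      intro x hx
      have hx0 : (0:ℝ) ≤ x := le_of_lt hx
      simp only [F, Real.norm_eq_abs, abs_div, abs_mul, abs_pow, abs_neg, abs_one, one_pow,
        abs_of_nonneg hx0, abs_of_pos (Real.exp_pos _),
        abs_of_pos (show (0:ℝ) < (n:ℝ) + 1 by positivity)]
      ring
    rw [setIntegral_congr_fun measurableSet_Ioi he, MeasureTheory.integral_const_mul,
      int_pow_exp k (hnc n)]
  have hsum : Summable fun n : ℕ => ∫ x, ‖F n x‖ ∂μ := by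
    have hs : Summable (fun n : ℕ => ((k.factorial : ℝ) / c ^ (k + 1)) * (1 / ((n:ℝ) + 1) ^ (k + 1 + e))) :=
      (summable_base (by omega)).mul_left _
    refine hs.congr (fun n => ?_)
    rw [hnorm n]
    have h1 : ((n:ℝ) + 1) ≠ 0 := by positivity
    have h2 : c ≠ 0 := ne_of_gt hc
    rw [mul_pow]
    field_simp
    ring
  have key := MeasureTheory.integral_tsum_of_summable_integral_norm hint hsum
  have : ∫ x, (∑' n, F n x) ∂μ = ∫ x in Set.Ioi (0:ℝ), x ^ k * Ser e c x := by
    refine setIntegral_congr_fun measurableSet_Ioi (fun x _ => ?_)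
    simp only [F, Ser]
    exact tsum_mul_left
  rw [this] at key
  rw [← key]
  have hrw : ∀ n : ℕ, ∫ x, F n x ∂μ
      = ((k.factorial : ℝ) / c ^ (k + 1)) * ((-1:ℝ)^n / ((n:ℝ) + 1) ^ (k + 1 + e)) := by
    intro n
    rw [hFval n]
    have h1 : ((n:ℝ) + 1) ≠ 0 := by positivity
    have h2 : c ≠ 0 := ne_of_gt hc
    rw [mul_pow]
    field_simp
    ring
  simp only [hrw]
  exact tsum_mul_left

lemma abs_neg_exp_lt_one {y : ℝ} (hy : 0 < y) : |-Real.exp (-y)| < 1 := by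
  rw [abs_neg, abs_of_pos (Real.exp_pos _), Real.exp_lt_one_iff]
  linarith

lemma ser_log {c x : ℝ} (hcx : 0 < c * x) :
    Ser 1 c x = Real.log (1 + Real.exp (-(c * x))) := by
  have hs := Real.hasSum_pow_div_log_of_abs_lt_one (abs_neg_exp_lt_one hcx)
  have hs2 := hs.neg
  rw [sub_neg_eq_add, neg_neg] at hs2
  have hfun : (fun n : ℕ => -((-Real.exp (-(c*x))) ^ (n+1) / ((n:ℝ)+1)))
      = fun n : ℕ => (-1:ℝ)^n * Real.exp (-((((n:ℝ)+1)*c)*x)) / ((n:ℝ)+1)^1 := by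
    funext n
    have h1 : Real.exp (-(c*x)) ^ (n+1) = Real.exp (-((((n:ℝ)+1)*c)*x)) := by
      rw [← Real.exp_nat_mul]
      congr 1
      push_cast
      ring
    rw [neg_pow, pow_succ, h1]
    ring
  rw [hfun] at hs2
  exact hs2.tsum_eq

lemma ser_fermi {c x : ℝ} (hcx : 0 < c * x) :
    Ser 0 c x = 1 / (1 + Real.exp (c * x)) := by
  have hs := hasSum_geometric_of_abs_lt_one (abs_neg_exp_lt_one hcx)
  have hs2 := hs.mul_left (Real.exp (-(c*x)))
  have hval : Real.exp (-(c*x)) * (1 - -Real.exp (-(c*x)))⁻¹ = 1 / (1 + Real.exp (c*x)) := by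
    rw [sub_neg_eq_add, Real.exp_neg]
    have h2 : Real.exp (c*x) ≠ 0 := (Real.exp_pos _).ne'
    have h3 : (1:ℝ) + Real.exp (c*x) ≠ 0 := by positivity
    field_simp
    ring
  rw [hval] at hs2
  have hfun : (fun n : ℕ => Real.exp (-(c*x)) * (-Real.exp (-(c*x))) ^ n)
      = fun n : ℕ => (-1:ℝ)^n * Real.exp (-((((n:ℝ)+1)*c)*x)) / ((n:ℝ)+1)^0 := by
    funext n
    have h1 : Real.exp (-(c*x)) * Real.exp (-(c*x)) ^ n = Real.exp (-((((n:ℝ)+1)*c)*x)) := by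
      rw [← Real.exp_nat_mul, ← Real.exp_add]
      congr 1
      push_cast
      ring
    rw [neg_pow, pow_zero, div_one, ← h1]
    ring
  rw [hfun] at hs2
  exact hs2.tsum_eq

lemma intOn_log (k : ℕ) {a : ℝ} (ha : 0 < a) :
    IntegrableOn (fun x : ℝ => x ^ k * Real.log (1 + Real.exp (-(a*x)))) (Set.Ioi 0) := by
  refine Integrable.mono' (intOn_pow_exp k ha) ?_ ?_
  · refine Continuous.aestronglyMeasurable ?_
    exact (continuous_pow k).mul ((continuous_const.add
      (Real.continuous_exp.comp (continuous_const.mul continuous_id).neg)).log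
      (fun x => by exact (add_pos one_pos (Real.exp_pos _)).ne'))
  · filter_upwards [self_mem_ae_restrict measurableSet_Ioi] with x hx
    have hx0 : (0:ℝ) < x := hx
    have hE : (0:ℝ) < Real.exp (-(a*x)) := Real.exp_pos _
    have hlog0 : 0 ≤ Real.log (1 + Real.exp (-(a*x))) :=
      Real.log_nonneg (by linarith)
    have hlog : Real.log (1 + Real.exp (-(a*x))) ≤ Real.exp (-(a*x)) := by
      have := Real.log_le_sub_one_of_pos (show (0:ℝ) < 1 + Real.exp (-(a*x)) by linarith)
      linarith
    have hxk : (0:ℝ) ≤ x ^ k := by positivity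
    rw [Real.norm_eq_abs, abs_of_nonneg (mul_nonneg hxk hlog0)]
    nlinarith

lemma intOn_fermi (k : ℕ) {b : ℝ} (hb : 0 < b) :
    IntegrableOn (fun x : ℝ => x ^ k / (1 + Real.exp (b*x))) (Set.Ioi 0) := by
  refine Integrable.mono' (intOn_pow_exp k hb) ?_ ?_
  · refine Continuous.aestronglyMeasurable ?_
    exact (continuous_pow k).div (continuous_const.add
      (Real.continuous_exp.comp (continuous_const.mul continuous_id)))
      (fun x => by positivity)
  · filter_upwards [self_mem_ae_restrict measurableSet_Ioi] with x hx
    have hx0 : (0:ℝ) < x := hx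
    have hE : (0:ℝ) < Real.exp (b*x) := Real.exp_pos _
    have h1 : (0:ℝ) < 1 + Real.exp (b*x) := by linarith
    rw [Real.norm_eq_abs, abs_of_nonneg (by positivity)]
    rw [div_le_iff₀ h1, Real.exp_neg]
    have hxk : (0:ℝ) ≤ x ^ k := by positivity
    have h2 : Real.exp (b*x) ≠ 0 := ne_of_gt hE
    have h3 : (Real.exp (b*x))⁻¹ * Real.exp (b*x) = 1 := inv_mul_cancel₀ h2
    have h4 : (0:ℝ) < (Real.exp (b*x))⁻¹ := by positivity
    nlinarith

lemma int_log (k : ℕ) {a : ℝ} (ha : 0 < a) :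
    ∫ x in Set.Ioi (0:ℝ), x ^ k * Real.log (1 + Real.exp (-(a*x)))
      = ((k.factorial : ℝ) / a ^ (k+1)) * ∑' n : ℕ, (-1:ℝ)^n / ((n:ℝ)+1)^(k+2) := by
  have h1 : ∀ x ∈ Set.Ioi (0:ℝ), x ^ k * Real.log (1 + Real.exp (-(a*x)))
      = x ^ k * Ser 1 a x := by
    intro x hx
    rw [ser_log (mul_pos ha hx)]
  rw [setIntegral_congr_fun measurableSet_Ioi h1, engine k 1 (by omega) ha]

lemma int_fermi (k : ℕ) {b : ℝ} (hk : 1 ≤ k) (hb : 0 < b) :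
    ∫ x in Set.Ioi (0:ℝ), x ^ k / (1 + Real.exp (b*x))
      = ((k.factorial : ℝ) / b ^ (k+1)) * ∑' n : ℕ, (-1:ℝ)^n / ((n:ℝ)+1)^(k+1) := by
  have h1 : ∀ x ∈ Set.Ioi (0:ℝ), x ^ k / (1 + Real.exp (b*x))
      = x ^ k * Ser 0 b x := by
    intro x hx
    rw [ser_fermi (mul_pos hb hx), mul_one_div]
  rw [setIntegral_congr_fun measurableSet_Ioi h1, engine k 0 (by omega) hb]

lemma fsum_eq (p : ℕ) (a b x : ℝ) :
    ((-x)^(2*p) * (-(Real.log (1 + Real.exp (a*(-x))))) / (1 + Real.exp (b*(-x))))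
      + (x^(2*p) * (-(Real.log (1 + Real.exp (a*x)))) / (1 + Real.exp (b*x)))
    = -(x^(2*p) * Real.log (1 + Real.exp (-(a*x))))
        - a * (x^(2*p+1) / (1 + Real.exp (b*x))) := by
  have hneg : (-x : ℝ)^(2*p) = x^(2*p) := Even.neg_pow (even_two_mul p) x
  have hlog : Real.log (1 + Real.exp (a*x)) = a*x + Real.log (1 + Real.exp (-(a*x))) := by
    rw [show (1:ℝ) + Real.exp (a*x) = Real.exp (a*x) * (1 + Real.exp (-(a*x))) by
        rw [Real.exp_neg]; field_simp; ring,
      Real.log_mul (Real.exp_ne_zero _) (by positivity), Real.log_exp]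
  rw [hneg, show a*(-x) = -(a*x) by ring, show b*(-x) = -(b*x) by ring, hlog,
    Real.exp_neg (b*x)]
  have h1 : (0:ℝ) < 1 + Real.exp (b*x) := by positivity
  have h2 : Real.exp (b*x) ≠ 0 := Real.exp_ne_zero _
  field_simp
  ring

lemma main_pos (p : ℕ) {a b : ℝ} (ha : 0 < a) (hb : 0 < b) :
    ∫ x : ℝ, x^(2*p) * (-(Real.log (1 + Real.exp (a*x)))) / (1 + Real.exp (b*x))
      = -((((2*p).factorial : ℝ)) / a^(2*p+1) + a * (((2*p+1).factorial : ℝ)) / b^(2*p+2))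
          * ∑' n : ℕ, (-1:ℝ)^n / ((n:ℝ)+1)^(2*p+2) := by
  set f : ℝ → ℝ := fun x => x^(2*p) * (-(Real.log (1 + Real.exp (a*x)))) / (1 + Real.exp (b*x))
    with hf
  have hlogc : ∀ c : ℝ, Continuous fun x : ℝ => Real.log (1 + Real.exp (c*x)) := fun c =>
    Continuous.log (by fun_prop) (fun x => by positivity)
  have hcont : Continuous f := by
    exact ((continuous_pow _).mul (hlogc a).neg).div (by fun_prop) (fun x => by positivity)
  -- the log decomposition
  have hlog : ∀ x : ℝ, Real.log (1 + Real.exp (a*x))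
      = a*x + Real.log (1 + Real.exp (-(a*x))) := by
    intro x
    rw [show (1:ℝ) + Real.exp (a*x) = Real.exp (a*x) * (1 + Real.exp (-(a*x))) by
        rw [Real.exp_neg]; field_simp; ring,
      Real.log_mul (Real.exp_ne_zero _) (by positivity), Real.log_exp]
  -- integrability on Ioi 0
  have hIoi : IntegrableOn f (Set.Ioi 0) := by
    refine Integrable.mono'
      (g := fun x => Real.log 2 * (x^(2*p) * Real.exp (-(b*x)))
        + a * (x^(2*p+1) * Real.exp (-(b*x))))
      (((intOn_pow_exp (2*p) hb).const_mul _).add ((intOn_pow_exp (2*p+1) hb).const_mul _))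
      hcont.aestronglyMeasurable ?_
    filter_upwards [self_mem_ae_restrict measurableSet_Ioi] with x hx
    have hx0 : (0:ℝ) < x := hx
    have hE : (0:ℝ) < Real.exp (b*x) := Real.exp_pos _
    have hd : (0:ℝ) < 1 + Real.exp (b*x) := by linarith
    have hL0 : 0 ≤ Real.log (1 + Real.exp (a*x)) :=
      Real.log_nonneg (by nlinarith [Real.exp_pos (a*x)])
    have hxk : (0:ℝ) ≤ x^(2*p) := by positivity
    have hLle : Real.log (1 + Real.exp (a*x)) ≤ a*x + Real.log 2 := by
      rw [hlog x]
      have h1 : Real.exp (-(a*x)) ≤ 1 := by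
        rw [Real.exp_le_one_iff]; nlinarith
      have h2 := Real.log_le_log (by positivity : (0:ℝ) < 1 + Real.exp (-(a*x)))
        (show (1:ℝ) + Real.exp (-(a*x)) ≤ 2 by linarith)
      linarith
    have hfval : f x = -(x^(2*p) * Real.log (1 + Real.exp (a*x)) / (1 + Real.exp (b*x))) := by
      simp only [hf]; ring
    rw [hfval, norm_neg, Real.norm_eq_abs, abs_of_nonneg (by positivity)]
    rw [div_le_iff₀ hd]
    have he1 : Real.exp (-(b*x)) * Real.exp (b*x) = 1 := by
      rw [← Real.exp_add]; simp
    have he2 : (0:ℝ) ≤ Real.exp (-(b*x)) := (Real.exp_pos _).le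
    have hax : (0:ℝ) ≤ a*x := by positivity
    have hl2 : (0:ℝ) ≤ Real.log 2 := Real.log_nonneg (by norm_num)
    have hsub : 0 ≤ a*x + Real.log 2 - Real.log (1 + Real.exp (a*x)) := by linarith
    have hkey : (Real.log 2 * (x ^ (2*p) * Real.exp (-(b*x)))
          + a * (x^(2*p+1) * Real.exp (-(b*x)))) * (1 + Real.exp (b*x))
        = Real.log 2 * x^(2*p) * (Real.exp (-(b*x)) + 1)
          + a * x^(2*p+1) * (Real.exp (-(b*x)) + 1) := by
      linear_combination (Real.log 2 * x^(2*p) + a * x^(2*p+1)) * he1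
    have hsub2 : x^(2*p) * Real.log (1 + Real.exp (a*x))
        ≤ a * x^(2*p+1) + Real.log 2 * x^(2*p) := by
      calc x^(2*p) * Real.log (1 + Real.exp (a*x)) ≤ x^(2*p) * (a*x + Real.log 2) :=
            mul_le_mul_of_nonneg_left hLle hxk
        _ = a * x^(2*p+1) + Real.log 2 * x^(2*p) := by rw [pow_succ]; ring
    nlinarith [hkey, hsub2, mul_nonneg (mul_nonneg hl2 hxk) he2,
      mul_nonneg (mul_nonneg ha.le (by positivity : (0:ℝ) ≤ x^(2*p+1))) he2]
  -- integrability of x ↦ f (-x) on Ioi 0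
  have hIoiNeg : IntegrableOn (fun x => f (-x)) (Set.Ioi 0) := by
    have hfx : ∀ x : ℝ, f (-x)
        = -(x^(2*p) * Real.log (1 + Real.exp (-(a*x))) / (1 + Real.exp (-(b*x)))) := by
      intro x
      simp only [hf]
      rw [Even.neg_pow (even_two_mul p), show a*(-x) = -(a*x) by ring,
        show b*(-x) = -(b*x) by ring]
      ring
    refine Integrable.mono' (intOn_pow_exp (2*p) ha)
      (hcont.comp continuous_neg).aestronglyMeasurable ?_
    filter_upwards [self_mem_ae_restrict measurableSet_Ioi] with x hx
    have hx0 : (0:ℝ) < x := hx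
    have hE : (0:ℝ) < Real.exp (-(a*x)) := Real.exp_pos _
    have hE' : (0:ℝ) < Real.exp (-(b*x)) := Real.exp_pos _
    have hL0 : 0 ≤ Real.log (1 + Real.exp (-(a*x))) := Real.log_nonneg (by linarith)
    have hLle : Real.log (1 + Real.exp (-(a*x))) ≤ Real.exp (-(a*x)) := by
      have := Real.log_le_sub_one_of_pos (show (0:ℝ) < 1 + Real.exp (-(a*x)) by linarith)
      linarith
    have hxk : (0:ℝ) ≤ x^(2*p) := by positivity
    rw [hfx x, norm_neg, Real.norm_eq_abs, abs_of_nonneg (by positivity)]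
    have h5 : x^(2*p) * Real.log (1 + Real.exp (-(a*x))) / (1 + Real.exp (-(b*x)))
        ≤ x^(2*p) * Real.log (1 + Real.exp (-(a*x))) :=
      div_le_self (by positivity) (by linarith)
    have h6 : x^(2*p) * Real.log (1 + Real.exp (-(a*x))) ≤ x^(2*p) * Real.exp (-(a*x)) :=
      mul_le_mul_of_nonneg_left hLle hxk
    linarith
  -- integrability on Iic 0
  have hIic : IntegrableOn f (Set.Iic 0) := by
    rw [← (Measure.measurePreserving_neg (volume : Measure ℝ)).integrableOn_comp_preimage
      (Homeomorph.neg ℝ).measurableEmbedding]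
    simp only [Function.comp_def, neg_preimage, neg_Iic, neg_zero]
    rw [integrableOn_Ici_iff_integrableOn_Ioi]
    exact hIoiNeg
  have split : ∫ x : ℝ, f x = (∫ x in Set.Iic (0:ℝ), f x) + ∫ x in Set.Ioi (0:ℝ), f x :=
    (intervalIntegral.integral_Iic_add_Ioi hIic hIoi).symm
  have compneg : ∫ x in Set.Iic (0:ℝ), f x = ∫ x in Set.Ioi (0:ℝ), f (-x) := by
    simpa using (integral_comp_neg_Ioi 0 f).symm
  have hadd : (∫ x in Set.Ioi (0:ℝ), f (-x)) + ∫ x in Set.Ioi (0:ℝ), f x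
      = ∫ x in Set.Ioi (0:ℝ), (f (-x) + f x) := (integral_add hIoiNeg hIoi).symm
  have hIlog := intOn_log (2*p) ha
  have hIfer := intOn_fermi (2*p+1) hb
  have hptw : ∫ x in Set.Ioi (0:ℝ), (f (-x) + f x)
      = ∫ x in Set.Ioi (0:ℝ), (-(x^(2*p) * Real.log (1 + Real.exp (-(a*x))))
          - a * (x^(2*p+1) / (1 + Real.exp (b*x)))) := by
    refine setIntegral_congr_fun measurableSet_Ioi (fun x _ => ?_)
    simp only [hf]
    exact fsum_eq p a b x
  have hsplit2 : ∫ x in Set.Ioi (0:ℝ), (-(x^(2*p) * Real.log (1 + Real.exp (-(a*x))))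
          - a * (x^(2*p+1) / (1 + Real.exp (b*x))))
      = -(∫ x in Set.Ioi (0:ℝ), x^(2*p) * Real.log (1 + Real.exp (-(a*x))))
        - a * ∫ x in Set.Ioi (0:ℝ), x^(2*p+1) / (1 + Real.exp (b*x)) := by
    have h1' : IntegrableOn (fun x : ℝ => -(x^(2*p) * Real.log (1 + Real.exp (-(a*x)))))
        (Set.Ioi 0) := hIlog.neg
    have h2' : IntegrableOn (fun x : ℝ => a * (x^(2*p+1) / (1 + Real.exp (b*x))))
        (Set.Ioi 0) := hIfer.const_mul a
    rw [integral_sub h1' h2', integral_neg, integral_const_mul]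
  have hI1 := int_log (2*p) ha
  have hI2 := int_fermi (2*p+1) (by omega) hb
  rw [split, compneg, hadd, hptw, hsplit2, hI1, hI2]
  norm_num
  ring

theorem stmt8 (p : ℕ) (a b : ℝ) (hab : a * b > 0) :
    Real.sign b * b^(2*p+1) *
      (∫ x : ℝ, x^(2*p) * (-(Real.log (1 + Real.exp (a*x)))) / (1 + Real.exp (b*x))) =
    -((((2*p).factorial : ℝ))/(a/b)^(2*p+1) + (a/b) * (((2*p+1).factorial : ℝ))) *
      dEta (2*p+2) := by
  have hEta : dEta (2*p+2) = ∑' n : ℕ, (-1:ℝ)^n / ((n:ℝ)+1)^(2*p+2) := by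
    simp only [dEta]
    rw [if_neg (by omega), if_neg (by omega)]
  rcases mul_pos_iff.mp hab with ⟨ha, hb⟩ | ⟨ha, hb⟩
  · rw [main_pos p ha hb, Real.sign_of_pos hb, hEta, one_mul]
    have ha' : a ≠ 0 := ha.ne'
    have hb' : b ≠ 0 := hb.ne'
    rw [div_pow]
    field_simp
    ring
  · have hgf : (fun x : ℝ => x^(2*p) * (-(Real.log (1 + Real.exp (a*x)))) / (1 + Real.exp (b*x)))
        = fun x : ℝ => (-x)^(2*p) * (-(Real.log (1 + Real.exp ((-a)*(-x)))))
            / (1 + Real.exp ((-b)*(-x))) := by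
      funext x
      rw [Even.neg_pow (even_two_mul p), show (-a)*(-x) = a*x by ring,
        show (-b)*(-x) = b*x by ring]
    rw [hgf, integral_neg_eq_self
      (fun x : ℝ => x^(2*p) * (-(Real.log (1 + Real.exp ((-a)*x)))) / (1 + Real.exp ((-b)*x)))
      volume]
    rw [main_pos p (neg_pos.mpr ha) (neg_pos.mpr hb), Real.sign_of_neg hb, hEta]
    have ha' : a ≠ 0 := ha.ne
    have hb' : b ≠ 0 := hb.ne
    have h1 : (-a)^(2*p+1) = -(a^(2*p+1)) := Odd.neg_pow ⟨p, by ring⟩ a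
    have h2 : (-b)^(2*p+2) = b^(2*p+2) := Even.neg_pow ⟨p+1, by ring⟩ b
    rw [h1, h2, div_pow]
    field_simp
    ring
end

section
/- Let a ∈ ℝ with 0 < |a| < 1. Then ∫_{0}^{∞} y^{a} · (−log(1+y)) / (y·(1+y)) dy = (π / sin(aπ)) · ∑_{j=1}^{∞} ( 1/j − 1/(j−a) ), where log is the real natural logarithm (the right-hand side equals π·csc(aπ)·(γ + ψ(1−a)) with γ the Euler–Mascheroni constant and ψ the digamma function). -/
open MeasureTheory Filter

open Set



lemma myRealBeta {s : ℝ} (hs0 : 0 < s) (hs1 : s < 1) :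
    ∫ x in (0:ℝ)..1, x ^ (s-1) * (1-x) ^ (-s) = Real.pi / Real.sin (Real.pi * s) := by
  have h1 : Complex.Gamma s * Complex.Gamma (1 - s) =
      Complex.Gamma ((s:ℂ) + (1 - s)) * Complex.betaIntegral s (1 - s) := by
    apply Complex.Gamma_mul_Gamma_eq_betaIntegral <;> simp [hs0, hs1]
  have h2 : Complex.betaIntegral s (1 - s) =
      ((∫ x in (0:ℝ)..1, x ^ (s-1) * (1-x) ^ (-s) : ℝ) : ℂ) := by
    rw [Complex.betaIntegral, ← intervalIntegral.integral_ofReal]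
    apply intervalIntegral.integral_congr
    intro x hx
    rw [Set.uIcc_of_le (by norm_num : (0:ℝ) ≤ 1)] at hx
    push_cast
    rw [Complex.ofReal_cpow hx.1, Complex.ofReal_cpow (by linarith [hx.2] : (0:ℝ) ≤ 1 - x)]
    push_cast
    ring_nf
  have h3 : ((s:ℂ) + (1 - s)) = 1 := by ring
  rw [h3, Complex.Gamma_one, one_mul, h2] at h1
  have h4 : Complex.Gamma (1 - (s:ℂ)) = ((Real.Gamma (1 - s) : ℝ) : ℂ) := by
    rw [← Complex.Gamma_ofReal]; push_cast; ring_nf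
  rw [Complex.Gamma_ofReal, h4, ← Complex.ofReal_mul] at h1
  have := Complex.ofReal_injective h1.symm
  rw [this, Real.Gamma_mul_Gamma_one_sub]


-- integrability of y^(s-1)/(1+t*y) on Ioi 0
lemma myInt1 {s : ℝ} (hs0 : 0 < s) (hs1 : s < 1) {t : ℝ} (ht : 0 < t) :
    IntegrableOn (fun y : ℝ => y ^ (s-1) / (1 + t*y)) (Set.Ioi 0) := by
  have hm : Measurable fun y : ℝ => y ^ (s-1) / (1 + t*y) :=
    (measurable_id.pow_const _).div (measurable_const.add (measurable_id.const_mul t))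
  have h1 : IntegrableOn (fun y : ℝ => y ^ (s-1) / (1 + t*y)) (Set.Ioc 0 1) := by
    have hmaj : IntegrableOn (fun y : ℝ => y ^ (s-1)) (Set.Ioc 0 1) :=
      (intervalIntegral.intervalIntegrable_rpow' (by linarith : (-1:ℝ) < s-1)).1
    apply hmaj.mono' hm.aestronglyMeasurable.restrict
    filter_upwards [ae_restrict_mem measurableSet_Ioc] with y hy
    have hy0 : 0 < y := hy.1
    have hd : (1:ℝ) ≤ 1 + t*y := by nlinarith
    rw [Real.norm_eq_abs, abs_of_nonneg (by positivity)]
    calc y ^ (s-1) / (1 + t*y) ≤ y ^ (s-1) / 1 := by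
          apply div_le_div_of_nonneg_left (by positivity) (by norm_num) hd
      _ = y ^ (s-1) := div_one _
  have h2 : IntegrableOn (fun y : ℝ => y ^ (s-1) / (1 + t*y)) (Set.Ioi 1) := by
    have hmaj : IntegrableOn (fun y : ℝ => t⁻¹ * y ^ (s-2)) (Set.Ioi 1) :=
      (integrableOn_Ioi_rpow_of_lt (by linarith : s-2 < -1) one_pos).const_mul t⁻¹
    apply hmaj.mono' hm.aestronglyMeasurable.restrict
    filter_upwards [ae_restrict_mem measurableSet_Ioi] with y hy
    have hy1 : (1:ℝ) < y := hy
    have hy0 : (0:ℝ) < y := by linarith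
    rw [Real.norm_eq_abs, abs_of_nonneg (by positivity)]
    have hd : t*y ≤ 1 + t*y := by nlinarith
    calc y ^ (s-1) / (1 + t*y) ≤ y ^ (s-1) / (t*y) := by
          apply div_le_div_of_nonneg_left (by positivity) (by positivity) hd
      _ = t⁻¹ * y ^ (s-2) := by
          rw [show s-1 = (s-2) + 1 by ring, Real.rpow_add hy0, Real.rpow_one]
          field_simp
  have := h1.union h2
  rwa [Set.Ioc_union_Ioi_eq_Ioi zero_le_one] at this

lemma mySubst {s : ℝ} (hs0 : 0 < s) (hs1 : s < 1) :
    ∫ y in Set.Ioi (0:ℝ), y ^ (s-1) / (1 + y) = Real.pi / Real.sin (Real.pi * s) := by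
  have himg : (fun t : ℝ => t / (1 - t)) '' Set.Ioo 0 1 = Set.Ioi 0 := by
    ext x
    constructor
    · rintro ⟨t, ht, rfl⟩
      exact div_pos ht.1 (by linarith [ht.2])
    · intro hx
      have hx' : (0:ℝ) < x := hx
      refine ⟨x / (1+x), ⟨div_pos hx' (by linarith), ?_⟩, ?_⟩
      · rw [div_lt_one (by linarith)]; linarith
      · simp only []
        rw [show (1:ℝ) - x/(1+x) = 1/(1+x) by field_simp; ring]
        field_simp
  have hderiv : ∀ t ∈ Set.Ioo (0:ℝ) 1,
      HasDerivWithinAt (fun t : ℝ => t / (1 - t)) (((1-t)^2)⁻¹) (Set.Ioo 0 1) t := by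
    intro t ht
    have h1 : (1:ℝ) - t ≠ 0 := by linarith [ht.2]
    have := (hasDerivAt_id t).div ((hasDerivAt_id t).const_sub 1) h1
    convert this.hasDerivWithinAt using 1
    · rfl
    · rfl
    · rfl
    · simp only [id_eq]; ring
  have hinj : Set.InjOn (fun t : ℝ => t / (1 - t)) (Set.Ioo 0 1) := by
    intro t1 h1 t2 h2 he
    simp only at he
    rw [div_eq_div_iff (by linarith [h1.2]) (by linarith [h2.2])] at he
    nlinarith
  have key := integral_image_eq_integral_abs_deriv_smul measurableSet_Ioo hderiv hinj
    (fun y : ℝ => y ^ (s-1) / (1 + y))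
  rw [himg] at key
  rw [key]
  have hcong : ∀ t ∈ Set.Ioo (0:ℝ) 1,
      |((1-t)^2)⁻¹| • ((t/(1-t)) ^ (s-1) / (1 + t/(1-t))) = t ^ (s-1) * (1-t) ^ (-s) := by
    intro t ht
    have ht0 : 0 < t := ht.1
    have hu : 0 < 1 - t := by linarith [ht.2]
    have h1 : (1:ℝ) + t/(1-t) = 1/(1-t) := by field_simp; ring
    rw [h1, smul_eq_mul, abs_of_pos (by positivity), Real.div_rpow ht0.le hu.le]
    rw [← Real.rpow_natCast (1-t) 2]
    rw [show ((2:ℕ):ℝ) = (2:ℝ) by norm_num]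
    have h2 : (1-t)^(-s) * ((1-t)^(2:ℝ) * (1-t)^(s-1)) = 1 - t := by
      rw [← Real.rpow_add hu, ← Real.rpow_add hu,
        show -s + (2 + (s-1)) = (1:ℝ) by ring, Real.rpow_one]
    have hne : ((1-t):ℝ)^(2:ℝ) ≠ 0 := (Real.rpow_pos_of_pos hu _).ne'
    have hne2 : ((1-t):ℝ)^(s-1) ≠ 0 := (Real.rpow_pos_of_pos hu _).ne'
    field_simp
    linarith [h2]
  rw [setIntegral_congr_fun measurableSet_Ioo hcong]
  rw [← integral_Ioc_eq_integral_Ioo, ← intervalIntegral.integral_of_le (by norm_num : (0:ℝ) ≤ 1)]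
  exact myRealBeta hs0 hs1

lemma myInt2 {s : ℝ} (hs0 : 0 < s) (hs1 : s < 1) {t : ℝ} (ht : 0 < t) :
    ∫ y in Set.Ioi (0:ℝ), y ^ (s-1) / (1 + t*y) = t ^ (-s) * (Real.pi / Real.sin (Real.pi * s)) := by
  have key := MeasureTheory.integral_comp_mul_left_Ioi
    (fun u : ℝ => u ^ (s-1) / (1 + u)) 0 ht
  rw [mul_zero] at key
  have hcong : ∀ y ∈ Set.Ioi (0:ℝ),
      (fun y : ℝ => (t*y) ^ (s-1) / (1 + t*y)) y = t^(s-1) * (y ^ (s-1) / (1 + t*y)) := by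
    intro y hy
    have hy0 : (0:ℝ) < y := hy
    simp only []
    rw [Real.mul_rpow ht.le hy0.le]
    ring
  rw [setIntegral_congr_fun measurableSet_Ioi hcong, MeasureTheory.integral_const_mul, mySubst hs0 hs1,
    smul_eq_mul] at key
  have hpos : (0:ℝ) < t ^ (s-1) := Real.rpow_pos_of_pos ht _
  have : ∫ y in Set.Ioi (0:ℝ), y ^ (s-1) / (1 + t*y)
      = (t^(s-1))⁻¹ * (t⁻¹ * (Real.pi / Real.sin (Real.pi * s))) := by
    rw [← key]; field_simp
  rw [this, ← Real.rpow_neg_one t, ← Real.rpow_neg ht.le, ← mul_assoc, ← Real.rpow_add ht,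
    show -(s-1) + -1 = -s by ring]

lemma myJ {a : ℝ} (ha0 : a ≠ 0) (ha1 : |a| < 1) {t : ℝ} (ht : t ∈ Set.Ioo (0:ℝ) 1) :
    IntegrableOn (fun y : ℝ => y ^ a / ((1+y)*(1+t*y))) (Set.Ioi 0) ∧
    ∫ y in Set.Ioi (0:ℝ), y ^ a / ((1+y)*(1+t*y)) =
      (Real.pi / Real.sin (Real.pi * (a+1))) * ((1 - t^(-a))/(1-t)) := by
  obtain ⟨ht0, ht1⟩ := ht
  have hne : (1:ℝ) - t ≠ 0 := by linarith
  have haneg : -1 < a := neg_lt_of_abs_lt ha1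
  have hapos : a < 1 := lt_of_abs_lt ha1
  have hSa : Real.sin (Real.pi * (a+1)) = - Real.sin (Real.pi * a) := by
    rw [show Real.pi * (a+1) = Real.pi * a + Real.pi by ring, Real.sin_add_pi]
  rcases lt_or_gt_of_ne ha0 with hneg | hpos
  · -- a < 0 case : use s = a + 1
    have hs0 : 0 < a + 1 := by linarith
    have hs1 : a + 1 < 1 := by linarith
    have hdecomp : ∀ y ∈ Set.Ioi (0:ℝ), y ^ a / ((1+y)*(1+t*y)) =
        (1-t)⁻¹ * (y ^ ((a+1)-1) / (1 + 1*y)) - ((1-t)⁻¹ * t) * (y ^ ((a+1)-1) / (1 + t*y)) := by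
      intro y hy
      have hy0 : (0:ℝ) < y := hy
      rw [show (a+1)-1 = a by ring, one_mul]
      have hd1 : (1:ℝ) + y ≠ 0 := by positivity
      have hd2 : (1:ℝ) + t*y ≠ 0 := by positivity
      field_simp
      ring
    have hi1 : IntegrableOn (fun y : ℝ => (1-t)⁻¹ * (y ^ ((a+1)-1) / (1 + 1*y)))
        (Set.Ioi 0) := (myInt1 hs0 hs1 one_pos).const_mul _
    have hi2 : IntegrableOn (fun y : ℝ => ((1-t)⁻¹ * t) * (y ^ ((a+1)-1) / (1 + t*y)))
        (Set.Ioi 0) := (myInt1 hs0 hs1 ht0).const_mul _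
    constructor
    · apply (hi1.sub hi2).congr
      filter_upwards [ae_restrict_mem measurableSet_Ioi] with y hy
      exact (hdecomp y hy).symm
    · rw [setIntegral_congr_fun measurableSet_Ioi hdecomp, integral_sub hi1 hi2,
        MeasureTheory.integral_const_mul, MeasureTheory.integral_const_mul,
        myInt2 hs0 hs1 one_pos, myInt2 hs0 hs1 ht0]
      have h1 : (1:ℝ) ^ (-(a+1)) = 1 := Real.one_rpow _
      have h2 : t * t ^ (-(a+1)) = t ^ (-a) := by
        rw [show (-a) = 1 + -(a+1) by ring, Real.rpow_add ht0, Real.rpow_one]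
      set C := Real.pi / Real.sin (Real.pi * (a+1)) with hC
      rw [h1, ← h2]
      field_simp
  · -- a > 0 case : use s = a
    have hdecomp : ∀ y ∈ Set.Ioi (0:ℝ), y ^ a / ((1+y)*(1+t*y)) =
        (1-t)⁻¹ * (y ^ (a-1) / (1 + t*y)) - (1-t)⁻¹ * (y ^ (a-1) / (1 + 1*y)) := by
      intro y hy
      have hy0 : (0:ℝ) < y := hy
      rw [one_mul, Real.rpow_sub hy0, Real.rpow_one]
      have hd1 : (1:ℝ) + y ≠ 0 := by positivity
      have hd2 : (1:ℝ) + t*y ≠ 0 := by positivity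
      field_simp
      ring
    have hi1 : IntegrableOn (fun y : ℝ => (1-t)⁻¹ * (y ^ (a-1) / (1 + t*y)))
        (Set.Ioi 0) := (myInt1 hpos hapos ht0).const_mul _
    have hi2 : IntegrableOn (fun y : ℝ => (1-t)⁻¹ * (y ^ (a-1) / (1 + 1*y)))
        (Set.Ioi 0) := (myInt1 hpos hapos one_pos).const_mul _
    constructor
    · apply (hi1.sub hi2).congr
      filter_upwards [ae_restrict_mem measurableSet_Ioi] with y hy
      exact (hdecomp y hy).symm
    · rw [setIntegral_congr_fun measurableSet_Ioi hdecomp, integral_sub hi1 hi2,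
        MeasureTheory.integral_const_mul, MeasureTheory.integral_const_mul,
        myInt2 hpos hapos one_pos, myInt2 hpos hapos ht0, hSa]
      have h1 : (1:ℝ) ^ (-a) = 1 := Real.one_rpow _
      rw [h1, div_neg]
      set C := Real.pi / Real.sin (Real.pi * a) with hC
      field_simp
      ring

lemma rpow01_int {c : ℝ} (hc : -1 < c) : IntegrableOn (fun t : ℝ => t ^ c) (Set.Ioo 0 1) :=
  ((intervalIntegral.intervalIntegrable_rpow' hc).1).mono_set Set.Ioo_subset_Ioc_self

lemma rpow01 {c : ℝ} (hc : -1 < c) : ∫ t in Set.Ioo (0:ℝ) 1, t ^ c = 1/(c+1) := by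
  rw [← integral_Ioc_eq_integral_Ioo, ← intervalIntegral.integral_of_le zero_le_one,
    integral_rpow (Or.inl hc), Real.one_rpow, Real.zero_rpow (by linarith : c+1 ≠ 0)]
  norm_num

lemma gBound {lam : ℝ} (hl : |lam| < 1) {t : ℝ} (ht : t ∈ Set.Ioo (0:ℝ) 1) :
    |1 - t ^ lam| ≤ t ^ (-|lam|) * (1 - t) := by
  obtain ⟨ht0, ht1⟩ := ht
  rcases le_or_gt 0 lam with hlam | hlam
  · rw [abs_of_nonneg hlam, abs_of_nonneg
      (by linarith [Real.rpow_le_one ht0.le ht1.le hlam] : (0:ℝ) ≤ 1 - t ^ lam)]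
    have h1 : t ^ (1:ℝ) ≤ t ^ lam :=
      Real.rpow_le_rpow_of_exponent_ge ht0 ht1.le (by linarith [lt_of_abs_lt hl])
    rw [Real.rpow_one] at h1
    have h2 : (1:ℝ) ≤ t ^ (-lam) :=
      Real.one_le_rpow_of_pos_of_le_one_of_nonpos ht0 ht1.le (by linarith)
    nlinarith
  · rw [abs_of_neg hlam]
    have h0 : (1:ℝ) ≤ t ^ lam :=
      Real.one_le_rpow_of_pos_of_le_one_of_nonpos ht0 ht1.le hlam.le
    rw [abs_of_nonpos (by linarith : 1 - t ^ lam ≤ 0)]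
    have h1 : t ^ (lam + 1) ≤ 1 :=
      Real.rpow_le_one ht0.le ht1.le (by linarith [neg_lt_of_abs_lt hl])
    rw [Real.rpow_add ht0, Real.rpow_one] at h1
    rw [neg_neg]
    nlinarith

lemma tIntegrable {lam : ℝ} (hl : |lam| < 1) :
    IntegrableOn (fun t : ℝ => (1 - t ^ lam)/(1-t)) (Set.Ioo 0 1) := by
  have hm : Measurable fun t : ℝ => (1 - t ^ lam)/(1-t) :=
    (measurable_const.sub (measurable_id.pow_const _)).div (measurable_const.sub measurable_id)
  apply (rpow01_int (by linarith [abs_nonneg lam] : (-1:ℝ) < -|lam|)).mono'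
    hm.aestronglyMeasurable.restrict
  filter_upwards [ae_restrict_mem measurableSet_Ioo] with t ht
  have h1t : 0 < 1 - t := by linarith [ht.2]
  rw [Real.norm_eq_abs, abs_div, abs_of_pos h1t, div_le_iff₀ h1t]
  exact gBound hl ht

lemma tIntegral {lam : ℝ} (hl : |lam| < 1) :
    ∫ t in Set.Ioo (0:ℝ) 1, (1 - t ^ lam)/(1-t) =
      ∑' j : ℕ, (1/((j:ℝ)+1) - 1/(((j:ℝ)+1)+lam)) := by
  have hlneg : -1 < lam := neg_lt_of_abs_lt hl
  have hlpos : lam < 1 := lt_of_abs_lt hl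
  set F : ℕ → ℝ → ℝ := fun j t => t ^ ((j:ℝ)) - t ^ ((j:ℝ)+lam) with hF
  have he1 : ∀ j : ℕ, (-1:ℝ) < (j:ℝ) := fun j => by
    have : (0:ℝ) ≤ (j:ℝ) := Nat.cast_nonneg j
    linarith
  have he2 : ∀ j : ℕ, (-1:ℝ) < (j:ℝ)+lam := fun j => by
    have : (0:ℝ) ≤ (j:ℝ) := Nat.cast_nonneg j
    linarith
  have hFint : ∀ j : ℕ, IntegrableOn (F j) (Set.Ioo 0 1) :=
    fun j => (rpow01_int (he1 j)).sub (rpow01_int (he2 j))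
  have hval : ∀ j : ℕ, ∫ t in Set.Ioo (0:ℝ) 1, F j t
      = 1/((j:ℝ)+1) - 1/(((j:ℝ)+1)+lam) := by
    intro j
    rw [hF]
    simp only []
    rw [integral_sub (rpow01_int (he1 j)) (rpow01_int (he2 j)), rpow01 (he1 j), rpow01 (he2 j)]
    ring_nf
  -- bound on the norm integrals
  have hbound : ∀ j : ℕ, (∫ t in Set.Ioo (0:ℝ) 1, ‖F j t‖)
      ≤ (1-|lam|)⁻¹^2 * (1/((j:ℝ)+1)^2) := by
    intro j
    have hmaj : IntegrableOn (fun t : ℝ => t ^ ((j:ℝ)-|lam|) - t ^ ((j:ℝ)-|lam|+1))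
        (Set.Ioo 0 1) := by
      apply (rpow01_int _).sub (rpow01_int _) <;>
        · have hj : (0:ℝ) ≤ (j:ℝ) := Nat.cast_nonneg j
          linarith [hl, abs_nonneg lam]
    have hj : (0:ℝ) ≤ (j:ℝ) := Nat.cast_nonneg j
    have hA0 : (0:ℝ) ≤ |lam| := abs_nonneg lam
    have hA1 : |lam| < 1 := hl
    have hc1 : (-1:ℝ) < (j:ℝ)-|lam| := by linarith
    have hc2 : (-1:ℝ) < (j:ℝ)-|lam|+1 := by linarith
    have hstep : (∫ t in Set.Ioo (0:ℝ) 1, ‖F j t‖)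
        ≤ ∫ t in Set.Ioo (0:ℝ) 1, (t^((j:ℝ)-|lam|) - t^((j:ℝ)-|lam|+1)) := by
      apply setIntegral_mono_on ((hFint j).norm) hmaj measurableSet_Ioo
      intro t ht
      have ht0 : (0:ℝ) < t := ht.1
      have heq : F j t = t^((j:ℝ)) * (1 - t^lam) := by
        rw [hF]; simp only []; rw [Real.rpow_add ht0]; ring
      rw [Real.norm_eq_abs, heq, abs_mul, abs_of_nonneg (Real.rpow_nonneg ht0.le _)]
      calc t^((j:ℝ)) * |1 - t^lam| ≤ t^((j:ℝ)) * (t^(-|lam|)*(1-t)) :=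
            mul_le_mul_of_nonneg_left (gBound hl ht) (Real.rpow_nonneg ht0.le _)
        _ = t^((j:ℝ)-|lam|) - t^((j:ℝ)-|lam|+1) := by
            have e2 : t^((j:ℝ)-|lam|+1) = t^((j:ℝ)-|lam|) * t := by
              rw [Real.rpow_add ht0, Real.rpow_one]
            have e1 : t^((j:ℝ)-|lam|) = t^((j:ℝ)) * t^(-|lam|) := by
              rw [← Real.rpow_add ht0]; ring_nf
            rw [e2, e1]; ring
    have hveq : (∫ t in Set.Ioo (0:ℝ) 1, (t^((j:ℝ)-|lam|) - t^((j:ℝ)-|lam|+1)))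
        = 1/((j:ℝ)-|lam|+1) - 1/((j:ℝ)-|lam|+1+1) := by
      rw [integral_sub (rpow01_int hc1) (rpow01_int hc2), rpow01 hc1, rpow01 hc2]
    have hfin : 1/((j:ℝ)-|lam|+1) - 1/((j:ℝ)-|lam|+1+1)
        ≤ (1-|lam|)⁻¹^2 * (1/((j:ℝ)+1)^2) := by
      have hdA : (0:ℝ) < (j:ℝ)-|lam|+1 := by linarith
      have hdA2 : (0:ℝ) < (j:ℝ)-|lam|+1+1 := by linarith
      have key : 1/((j:ℝ)-|lam|+1) - 1/((j:ℝ)-|lam|+1+1)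
          = 1/(((j:ℝ)-|lam|+1)*((j:ℝ)-|lam|+1+1)) := by
        field_simp; ring
      have hprod : (1-|lam|)^2*((j:ℝ)+1)^2 ≤ ((j:ℝ)-|lam|+1)*((j:ℝ)-|lam|+1+1) := by
        have e1 : (1-|lam|)*((j:ℝ)+1) ≤ (j:ℝ)-|lam|+1 := by nlinarith
        have e2 : (1-|lam|)*((j:ℝ)+1) ≤ (j:ℝ)-|lam|+1+1 := by nlinarith
        nlinarith [mul_le_mul e1 e2 (by nlinarith : (0:ℝ) ≤ (1-|lam|)*((j:ℝ)+1)) (by linarith)]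
      rw [key]
      calc 1/(((j:ℝ)-|lam|+1)*((j:ℝ)-|lam|+1+1))
          ≤ 1/((1-|lam|)^2*((j:ℝ)+1)^2) :=
            one_div_le_one_div_of_le (mul_pos (pow_pos (by linarith : (0:ℝ) < 1-|lam|) 2) (by positivity)) hprod
        _ = (1-|lam|)⁻¹^2 * (1/((j:ℝ)+1)^2) := by
            rw [one_div, mul_inv, inv_pow, one_div]
    linarith [hstep, hveq ▸ hstep]
  have hsum : Summable (fun j : ℕ => ∫ t in Set.Ioo (0:ℝ) 1, ‖F j t‖) := by
    apply Summable.of_nonneg_of_le (fun j => integral_nonneg (fun t => norm_nonneg _)) hbound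
    apply Summable.mul_left
    have base : Summable (fun n : ℕ => 1/(n:ℝ)^2) :=
      Real.summable_one_div_nat_pow.mpr one_lt_two
    apply ((summable_nat_add_iff 1).mpr base).congr
    intro j
    push_cast
    ring
  calc ∫ t in Set.Ioo (0:ℝ) 1, (1 - t ^ lam)/(1-t)
      = ∫ t in Set.Ioo (0:ℝ) 1, ∑' j : ℕ, F j t := by
        apply setIntegral_congr_fun measurableSet_Ioo
        intro t ht
        simp only []
        have ht0 : (0:ℝ) < t := ht.1
        have hgeo : ∑' j:ℕ, t^(j:ℕ) = (1-t)⁻¹ := tsum_geometric_of_lt_one ht.1.le ht.2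
        have hterm : ∀ j:ℕ, F j t = (1-t^lam) * t^(j:ℕ) := by
          intro j
          rw [hF]; simp only []
          rw [Real.rpow_add ht0, Real.rpow_natCast]
          ring
        rw [tsum_congr hterm, tsum_mul_left, hgeo, div_eq_mul_inv]
    _ = ∑' j : ℕ, ∫ t in Set.Ioo (0:ℝ) 1, F j t :=
        (MeasureTheory.integral_tsum_of_summable_integral_norm hFint hsum).symm
    _ = ∑' j : ℕ, (1/((j:ℝ)+1) - 1/(((j:ℝ)+1)+lam)) := tsum_congr hval

lemma logInt {y : ℝ} (hy : 0 < y) :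
    ∫ t in Set.Ioo (0:ℝ) 1, (1 + t*y)⁻¹ = Real.log (1+y) / y := by
  rw [← integral_Ioc_eq_integral_Ioo, ← intervalIntegral.integral_of_le zero_le_one]
  have hder : ∀ t ∈ Set.uIcc (0:ℝ) 1,
      HasDerivAt (fun t => Real.log (1+t*y) / y) ((1+t*y)⁻¹) t := by
    intro t ht
    rw [Set.uIcc_of_le zero_le_one] at ht
    have hpos : 0 < 1 + t*y := by nlinarith [ht.1, ht.2]
    have h1 : HasDerivAt (fun t : ℝ => 1 + t*y) y t := by
      simpa using ((hasDerivAt_id t).mul_const y).const_add 1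
    have h2 := ((Real.hasDerivAt_log hpos.ne').comp t h1).div_const y
    convert h2 using 1
    · rfl
    · rfl
    · rfl
    · field_simp
  have hint : IntervalIntegrable (fun t : ℝ => (1+t*y)⁻¹) volume 0 1 := by
    apply ContinuousOn.intervalIntegrable
    apply ContinuousOn.inv₀
    · fun_prop
    · intro t ht
      rw [Set.uIcc_of_le zero_le_one] at ht
      nlinarith [ht.1, ht.2]
  rw [intervalIntegral.integral_eq_sub_of_hasDerivAt hder hint]
  norm_num

theorem stmt11 (a : ℝ) (ha0 : a ≠ 0) (ha1 : |a| < 1) :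
    (∫ y in Set.Ioi (0:ℝ), y ^ a * (-(Real.log (1+y))) / (y*(1+y))) =
    (Real.pi / Real.sin (a * Real.pi)) *
      ∑' j : ℕ, (1/((j:ℝ)+1) - 1/(((j:ℝ)+1) - a)) := by
  have hlam : |(-a)| < 1 := by rwa [abs_neg]
  set C : ℝ := Real.pi / Real.sin (Real.pi * (a+1)) with hCdef
  set F : ℝ → ℝ → ℝ := fun t y => y ^ a / ((1+y)*(1+t*y)) with hFdef
  have hmeas : AEStronglyMeasurable (Function.uncurry F)
      ((volume.restrict (Set.Ioo (0:ℝ) 1)).prod (volume.restrict (Set.Ioi (0:ℝ)))) := by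
    rw [MeasureTheory.Measure.prod_restrict]
    apply ContinuousOn.aestronglyMeasurable _ (measurableSet_Ioo.prod measurableSet_Ioi)
    show ContinuousOn (fun p : ℝ×ℝ => p.2 ^ a / ((1+p.2)*(1+p.1*p.2))) _
    apply ContinuousOn.div
    · intro p hp
      exact (ContinuousAt.comp (Real.continuousAt_rpow_const _ _
        (Or.inl (ne_of_gt hp.2))) continuousAt_snd).continuousWithinAt
    · exact (by fun_prop : Continuous fun p : ℝ×ℝ => (1+p.2)*(1+p.1*p.2)).continuousOn
    · intro p hp
      have h1 : (0:ℝ) < p.2 := hp.2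
      have h2 : (0:ℝ) < p.1 := hp.1.1
      positivity
  have hslice : ∀ t ∈ Set.Ioo (0:ℝ) 1, IntegrableOn (F t) (Set.Ioi 0) :=
    fun t ht => (myJ ha0 ha1 ht).1
  have hJval : ∀ t ∈ Set.Ioo (0:ℝ) 1, (∫ y in Set.Ioi (0:ℝ), F t y)
      = C * ((1 - t^(-a))/(1-t)) := fun t ht => (myJ ha0 ha1 ht).2
  have hnormint : Integrable (fun t => ∫ y in Set.Ioi (0:ℝ), ‖F t y‖)
      (volume.restrict (Set.Ioo (0:ℝ) 1)) := by
    have hg : IntegrableOn (fun t : ℝ => C * ((1 - t^(-a))/(1-t))) (Set.Ioo 0 1) :=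
      (tIntegrable hlam).const_mul _
    apply hg.congr
    filter_upwards [ae_restrict_mem measurableSet_Ioo] with t ht
    have h1 : (∫ y in Set.Ioi (0:ℝ), ‖F t y‖) = ∫ y in Set.Ioi (0:ℝ), F t y := by
      apply setIntegral_congr_fun measurableSet_Ioi
      intro y hy
      have hy0 : (0:ℝ) < y := hy
      have ht0 : (0:ℝ) < t := ht.1
      simp only []
      have hnn : (0:ℝ) ≤ F t y := by
        rw [hFdef]; simp only []; positivity
      exact Real.norm_of_nonneg hnn
    rw [h1, hJval t ht]
  have hprodint : Integrable (Function.uncurry F)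
      ((volume.restrict (Set.Ioo (0:ℝ) 1)).prod (volume.restrict (Set.Ioi (0:ℝ)))) := by
    rw [MeasureTheory.integrable_prod_iff hmeas]
    constructor
    · filter_upwards [ae_restrict_mem measurableSet_Ioo] with t ht
      exact hslice t ht
    · exact hnormint
  have hswap := MeasureTheory.integral_integral_swap hprodint
  have hL : (∫ t in Set.Ioo (0:ℝ) 1, ∫ y in Set.Ioi (0:ℝ), F t y)
      = C * ∑' j:ℕ, (1/((j:ℝ)+1) - 1/(((j:ℝ)+1)+(-a))) := by
    rw [setIntegral_congr_fun measurableSet_Ioo hJval,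
      MeasureTheory.integral_const_mul, tIntegral hlam]
  have hR : (∫ y in Set.Ioi (0:ℝ), ∫ t in Set.Ioo (0:ℝ) 1, F t y)
      = ∫ y in Set.Ioi (0:ℝ), (y ^ a / (1+y)) * (Real.log (1+y) / y) := by
    apply setIntegral_congr_fun measurableSet_Ioi
    intro y hy
    have hy0 : (0:ℝ) < y := hy
    have hpt : ∀ t, F t y = (y^a/(1+y)) * (1+t*y)⁻¹ := by
      intro t
      rw [hFdef]
      simp only []
      rw [div_mul_eq_div_div, div_eq_mul_inv]
    simp only [hpt]
    rw [MeasureTheory.integral_const_mul, logInt hy0]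
  rw [hL, hR] at hswap
  have hgoal : (∫ y in Set.Ioi (0:ℝ), y ^ a * (-(Real.log (1+y))) / (y*(1+y)))
      = - ∫ y in Set.Ioi (0:ℝ), (y ^ a / (1+y)) * (Real.log (1+y) / y) := by
    rw [← MeasureTheory.integral_neg]
    apply setIntegral_congr_fun measurableSet_Ioi
    intro y hy
    have hy0 : (0:ℝ) < y := hy
    have h1y : (0:ℝ) < 1 + y := by linarith
    simp only []
    rw [div_mul_div_comm, mul_comm ((1:ℝ)+y) y, mul_neg, neg_div]
  rw [hgoal, ← hswap]
  have hsin : Real.sin (Real.pi * (a+1)) = - Real.sin (a * Real.pi) := by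
    rw [show Real.pi * (a+1) = a * Real.pi + Real.pi by ring, Real.sin_add_pi]
  have hCeq : -C = Real.pi / Real.sin (a * Real.pi) := by
    rw [hCdef, hsin, div_neg, neg_neg]
  have htsum : (∑' j:ℕ, (1/((j:ℝ)+1) - 1/(((j:ℝ)+1)+(-a))))
      = ∑' j : ℕ, (1/((j:ℝ)+1) - 1/(((j:ℝ)+1) - a)) := by
    apply tsum_congr
    intro j
    rw [← sub_eq_add_neg]
  rw [← hCeq, ← htsum]
  ring
end

section
/- Let p ∈ ℕ (possibly 0) and a, b ∈ ℝ with a > 0 and b > 0; set q = a/b, and assume 1 − q^{2p+2}·(2p+1)·(1 − 2^{−1−2p}) ≠ 0. Then ζ(2p+2) = −( a^{2p+1} / ( (2p)!·( 1 − q^{2p+2}·(2p+1)·(1 − 2^{−1−2p}) ) ) ) · Re( ∫_{−∞}^{∞} x^{2p} · Log(1 − e^{ax})/(1 + e^{bx}) dx ), where Log denotes the principal branch of the complex logarithm. -/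
open MeasureTheory Filter

open Set Real

lemma integrableOn_pow_mul_exp (n : ℕ) {c : ℝ} (hc : 0 < c) :
    IntegrableOn (fun x : ℝ => x ^ n * Real.exp (-(c * x))) (Ioi 0) := by
  have h := integrableOn_rpow_mul_exp_neg_mul_rpow (p := 1) (s := (n:ℝ))
    (by exact_mod_cast neg_one_lt_zero.trans_le (Nat.cast_nonneg n) : (-1:ℝ) < n) one_pos hc
  refine (h.congr_fun (fun x hx => ?_) measurableSet_Ioi)
  simp [Real.rpow_natCast, Real.rpow_one, neg_mul]

lemma mellin_nat (n : ℕ) {c : ℝ} (hc : 0 < c) :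
    ∫ x in Ioi (0:ℝ), x ^ n * Real.exp (-(c * x)) = n.factorial / c ^ (n+1) := by
  have h := integral_rpow_mul_exp_neg_mul_Ioi (a := (n:ℝ)+1) (by positivity) hc
  rw [show ((n:ℝ)+1) - 1 = (n:ℝ) by ring] at h
  rw [show ∫ x in Ioi (0:ℝ), x ^ n * Real.exp (-(c * x))
      = ∫ x in Ioi (0:ℝ), x ^ ((n:ℝ)) * Real.exp (-(c * x)) from
    setIntegral_congr_fun measurableSet_Ioi (fun x hx => by
      rw [Real.rpow_natCast]), h]
  push_cast
  rw [Real.Gamma_nat_eq_factorial,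
    show ((n:ℝ)+1) = ((n+1 : ℕ) : ℝ) by push_cast; ring, Real.rpow_natCast, div_pow, one_pow]
  push_cast
  ring

lemma key_tsum {f : ℕ → ℝ → ℝ} {g : ℝ → ℝ} {s : Set ℝ} (hs : MeasurableSet s)
    (hgm : AEStronglyMeasurable g (volume.restrict s))
    (h0 : ∀ n, ∀ x ∈ s, 0 ≤ f n x)
    (hg : ∀ x ∈ s, HasSum (fun n => f n x) (g x))
    (hint : ∀ n, IntegrableOn (f n) s)
    (hsum : Summable fun n => ∫ x in s, f n x) :
    IntegrableOn g s ∧ ∫ x in s, g x = ∑' n, ∫ x in s, f n x := by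
  set μ := volume.restrict s with hμ
  have hae : ∀ᵐ x ∂μ, x ∈ s := ae_restrict_mem hs
  have hnn : ∀ n, ∫ x, ‖f n x‖ ∂μ = ∫ x, f n x ∂μ := by
    intro n
    refine integral_congr_ae ?_
    filter_upwards [hae] with x hx
    exact Real.norm_of_nonneg (h0 n x hx)
  have hIg : IntegrableOn g s := by
    refine ⟨hgm, ?_⟩
    rw [hasFiniteIntegral_iff_norm]
    have hb : ∀ᵐ x ∂μ, ENNReal.ofReal ‖g x‖ ≤ ∑' n, ENNReal.ofReal (f n x) := by
      filter_upwards [hae] with x hx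
      have h1 : 0 ≤ g x := (hg x hx).nonneg (fun n => h0 n x hx)
      rw [Real.norm_of_nonneg h1, ← (hg x hx).tsum_eq,
        ENNReal.ofReal_tsum_of_nonneg (fun n => h0 n x hx) (hg x hx).summable]
    calc ∫⁻ x, ENNReal.ofReal ‖g x‖ ∂μ
        ≤ ∫⁻ x, ∑' n, ENNReal.ofReal (f n x) ∂μ := lintegral_mono_ae hb
      _ = ∑' n, ∫⁻ x, ENNReal.ofReal (f n x) ∂μ :=
          lintegral_tsum (fun n => ((hint n).aemeasurable.ennreal_ofReal))
      _ = ∑' n, ENNReal.ofReal (∫ x, f n x ∂μ) := by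
          refine tsum_congr fun n => ?_
          rw [ofReal_integral_eq_lintegral_ofReal (hint n)]
          filter_upwards [hae] with x hx using h0 n x hx
      _ = ENNReal.ofReal (∑' n, ∫ x, f n x ∂μ) := by
          rw [ENNReal.ofReal_tsum_of_nonneg
            (fun n => integral_nonneg_of_ae (by filter_upwards [hae] with x hx using h0 n x hx))
            hsum]
      _ < ⊤ := ENNReal.ofReal_lt_top
  refine ⟨hIg, ?_⟩
  have hS := hasSum_integral_of_summable_integral_norm (μ := μ) (F := f) hint ?_
  · have : ∫ x, (∑' n, f n x) ∂μ = ∫ x, g x ∂μ := by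
      refine integral_congr_ae ?_
      filter_upwards [hae] with x hx using (hg x hx).tsum_eq
    rw [this] at hS
    exact hS.tsum_eq.symm
  · exact hsum.congr fun n => (hnn n).symm

lemma summable_Z (s : ℕ) (hs : 2 ≤ s) : Summable (fun n : ℕ => 1/((n:ℝ)+1)^s) := by
  have := (Real.summable_one_div_nat_pow (p := s)).2 hs
  have h2 := (summable_nat_add_iff 1).2 this
  refine h2.congr fun n => ?_
  push_cast
  ring_nf

lemma eta_Z (s : ℕ) (hs : 2 ≤ s) :
    ∑' j : ℕ, (1/((2*j:ℝ)+1)^s - 1/((2*j:ℝ)+2)^s)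
      = (1 - 2*((2:ℝ)^s)⁻¹) * ∑' n : ℕ, 1/((n:ℝ)+1)^s := by
  have hZ := summable_Z s hs
  set u : ℕ → ℝ := fun n => 1/((n:ℝ)+1)^s with hu
  have he : Summable (fun j : ℕ => u (2*j)) := hZ.comp_injective (mul_right_injective₀ two_ne_zero)
  have ho : Summable (fun j : ℕ => u (2*j+1)) :=
    hZ.comp_injective (fun x y hxy => by omega)
  have hodd : ∀ j : ℕ, u (2*j+1) = ((2:ℝ)^s)⁻¹ * u j := by
    intro j
    simp only [hu]
    rw [show ((2*j+1:ℕ):ℝ)+1 = 2*((j:ℝ)+1) by push_cast; ring, mul_pow]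
    field_simp
  have hosum : ∑' j, u (2*j+1) = ((2:ℝ)^s)⁻¹ * ∑' n, u n := by
    rw [tsum_congr hodd, tsum_mul_left]
  have hsplit := tsum_even_add_odd he ho
  have h1 : ∀ j : ℕ, (1/((2*j:ℝ)+1)^s - 1/((2*j:ℝ)+2)^s) = u (2*j) - u (2*j+1) := by
    intro j; simp only [hu]; push_cast; ring_nf
  rw [tsum_congr h1, Summable.tsum_sub he ho, hosum]
  have : ∑' j, u (2*j) = ∑' n, u n - ((2:ℝ)^s)⁻¹ * ∑' n, u n := by
    rw [← hosum]; linarith [hsplit]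
  rw [this]; ring

lemma phi_side (p : ℕ) {a : ℝ} (ha : 0 < a) :
    IntegrableOn (fun x : ℝ => -(x^(2*p) * Real.log (1 - Real.exp (-(a*x))))) (Ioi 0) ∧
    ∫ x in Ioi (0:ℝ), -(x^(2*p) * Real.log (1 - Real.exp (-(a*x))))
      = ((2*p).factorial / a^(2*p+1)) * ∑' n : ℕ, 1/((n:ℝ)+1)^(2*p+2) := by
  set k := 2*p with hk
  set f : ℕ → ℝ → ℝ := fun n x => x^k * Real.exp (-((((n:ℝ)+1)*a) * x)) / ((n:ℝ)+1) with hf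
  have hxk : ∀ x : ℝ, 0 ≤ x^k := by
    intro x; rw [hk, pow_mul]; exact pow_nonneg (sq_nonneg x) p
  have hmeas : AEStronglyMeasurable (fun x : ℝ => -(x^k * Real.log (1 - Real.exp (-(a*x)))))
      (volume.restrict (Ioi 0)) := by
    refine (Measurable.aestronglyMeasurable ?_)
    exact ((measurable_id.pow_const k).mul
      (Real.measurable_log.comp ((measurable_const.sub
        ((measurable_id.const_mul a).neg.exp))))).neg
  have hint : ∀ n : ℕ, IntegrableOn (f n) (Ioi 0) := by
    intro n
    have hc : 0 < ((n:ℝ)+1)*a := by positivity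
    exact (integrableOn_pow_mul_exp k hc).div_const _
  have hval : ∀ n : ℕ, ∫ x in Ioi (0:ℝ), f n x
      = (k.factorial / a^(k+1)) * (1/((n:ℝ)+1)^(k+2)) := by
    intro n
    have hc : 0 < ((n:ℝ)+1)*a := by positivity
    have := mellin_nat k hc
    simp only [hf]
    rw [integral_div, this, mul_pow, div_div, div_mul_div_comm, mul_one]
    congr 1
    ring
  have hg : ∀ x ∈ Ioi (0:ℝ), HasSum (fun n => f n x)
      (-(x^k * Real.log (1 - Real.exp (-(a*x))))) := by
    intro x hx
    have hax : 0 < a * x := mul_pos ha hx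
    have habs : |Real.exp (-(a*x))| < 1 := by
      rw [abs_of_pos (Real.exp_pos _)]
      exact Real.exp_lt_one_iff.2 (by linarith)
    have h1 := (Real.hasSum_pow_div_log_of_abs_lt_one habs).mul_left (x^k)
    have h2 : ∀ n : ℕ, x^k * (Real.exp (-(a*x)) ^ (n+1) / ((n:ℝ)+1)) = f n x := by
      intro n
      simp only [hf]
      rw [← Real.exp_nat_mul]
      push_cast
      ring_nf
    rw [show x^k * -Real.log (1 - Real.exp (-(a*x)))
        = -(x^k * Real.log (1 - Real.exp (-(a*x)))) by ring] at h1
    exact funext h2 ▸ h1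
  have h0 : ∀ n, ∀ x ∈ Ioi (0:ℝ), 0 ≤ f n x := by
    intro n x _
    have h1 := (Real.exp_pos (-((((n:ℝ)+1)*a) * x))).le
    have h2 := hxk x
    have h3 : (0:ℝ) < (n:ℝ)+1 := by positivity
    positivity
  have hsum : Summable (fun n => ∫ x in Ioi (0:ℝ), f n x) := by
    rw [funext hval]
    exact (summable_Z (k+2) (by omega)).mul_left _
  obtain ⟨hI, hval2⟩ := key_tsum measurableSet_Ioi hmeas h0 hg hint hsum
  refine ⟨hI, ?_⟩
  rw [hval2, tsum_congr hval, tsum_mul_left]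

lemma psi_side (p : ℕ) {b : ℝ} (hb : 0 < b) :
    IntegrableOn (fun x : ℝ => x^(2*p+1) / (1 + Real.exp (b*x))) (Ioi 0) ∧
    ∫ x in Ioi (0:ℝ), x^(2*p+1) / (1 + Real.exp (b*x))
      = ((2*p+1).factorial / b^(2*p+2)) *
        ∑' j : ℕ, (1/((2*j:ℝ)+1)^(2*p+2) - 1/((2*j:ℝ)+2)^(2*p+2)) := by
  set m := 2*p+1 with hm
  set f : ℕ → ℝ → ℝ := fun j x =>
    x^m * Real.exp (-((((2*j:ℝ)+1)*b) * x)) - x^m * Real.exp (-((((2*j:ℝ)+2)*b) * x)) with hf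
  have hmeas : AEStronglyMeasurable (fun x : ℝ => x^m / (1 + Real.exp (b*x)))
      (volume.restrict (Ioi 0)) := by
    refine Continuous.aestronglyMeasurable ?_
    have hden : ∀ x : ℝ, (1 + Real.exp (b*x)) ≠ 0 := fun x => by positivity
    exact (continuous_pow m).div (by continuity) hden
  have h0 : ∀ j : ℕ, ∀ x ∈ Ioi (0:ℝ), 0 ≤ f j x := by
    intro j x hx
    have hx0 : (0:ℝ) < x := hx
    have hle : Real.exp (-((((2*j:ℝ)+2)*b) * x)) ≤ Real.exp (-((((2*j:ℝ)+1)*b) * x)) := by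
      apply Real.exp_le_exp.2
      nlinarith
    have hxm : 0 ≤ x^m := pow_nonneg hx0.le m
    simp only [hf]
    nlinarith [mul_le_mul_of_nonneg_left hle hxm]
  have hg : ∀ x ∈ Ioi (0:ℝ), HasSum (fun j => f j x) (x^m / (1 + Real.exp (b*x))) := by
    intro x hx
    have hx0 : (0:ℝ) < x := hx
    set v : ℝ := Real.exp (-(b*x)) with hv
    have hv0 : 0 < v := Real.exp_pos _
    have hv1 : v < 1 := Real.exp_lt_one_iff.2 (by nlinarith)
    have hgeo := (hasSum_geometric_of_lt_one (le_of_lt (by positivity : (0:ℝ) < v^2))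
      (by nlinarith : v^2 < 1)).mul_left (x^m * (v - v^2))
    have hterm : ∀ j : ℕ, x^m * (v - v^2) * (v^2)^j = f j x := by
      intro j
      have e1 : v * (v^2)^j = Real.exp (-((((2*j:ℝ)+1)*b) * x)) := by
        have hh : v * (v^2)^j = v^(2*j+1) := by ring
        rw [hh, hv, ← Real.exp_nat_mul]
        congr 1
        push_cast
        ring
      have e2 : v^2 * (v^2)^j = Real.exp (-((((2*j:ℝ)+2)*b) * x)) := by
        have hh : v^2 * (v^2)^j = v^(2*j+2) := by ring
        rw [hh, hv, ← Real.exp_nat_mul]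
        congr 1
        push_cast
        ring
      simp only [hf]
      rw [← e1, ← e2]
      ring
    have hE : Real.exp (b*x) = v⁻¹ := by
      rw [hv, ← Real.exp_neg, neg_neg]
    have hvalue : x^m * (v - v^2) * (1 - v^2)⁻¹ = x^m / (1 + Real.exp (b*x)) := by
      rw [hE]
      have h1 : (1:ℝ) - v^2 ≠ 0 := by nlinarith
      have h2 : (1:ℝ) + v⁻¹ ≠ 0 := by positivity
      field_simp
      ring
    rw [← hvalue]
    exact funext hterm ▸ hgeo
  have hint : ∀ j : ℕ, IntegrableOn (f j) (Ioi 0) := by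
    intro j
    have hc1 : (0:ℝ) < (((2*j:ℝ)+1)*b) := by positivity
    have hc2 : (0:ℝ) < (((2*j:ℝ)+2)*b) := by positivity
    exact (integrableOn_pow_mul_exp m hc1).sub (integrableOn_pow_mul_exp m hc2)
  have hval : ∀ j : ℕ, ∫ x in Ioi (0:ℝ), f j x
      = (m.factorial / b^(m+1)) * (1/((2*j:ℝ)+1)^(m+1) - 1/((2*j:ℝ)+2)^(m+1)) := by
    intro j
    have hc1 : (0:ℝ) < (((2*j:ℝ)+1)*b) := by positivity
    have hc2 : (0:ℝ) < (((2*j:ℝ)+2)*b) := by positivity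
    rw [show ∫ x in Ioi (0:ℝ), f j x = (∫ x in Ioi (0:ℝ), x^m * Real.exp (-((((2*j:ℝ)+1)*b) * x)))
        - ∫ x in Ioi (0:ℝ), x^m * Real.exp (-((((2*j:ℝ)+2)*b) * x)) from
      integral_sub (integrableOn_pow_mul_exp m hc1) (integrableOn_pow_mul_exp m hc2),
      mellin_nat m hc1, mellin_nat m hc2, mul_pow, mul_pow]
    have hb1 : ((2*j:ℝ)+1) ≠ 0 := by positivity
    have hb2 : ((2*j:ℝ)+2) ≠ 0 := by positivity
    have hb3 : b ≠ 0 := ne_of_gt hb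
    field_simp
  have hsum : Summable (fun j => ∫ x in Ioi (0:ℝ), f j x) := by
    rw [funext hval]
    apply Summable.mul_left
    have hZ := summable_Z (m+1) (by omega)
    have he : Summable (fun j : ℕ => 1/(((2*j:ℕ):ℝ)+1)^(m+1)) :=
      hZ.comp_injective (mul_right_injective₀ two_ne_zero)
    have ho : Summable (fun j : ℕ => 1/(((2*j+1:ℕ):ℝ)+1)^(m+1)) :=
      hZ.comp_injective (fun x y hxy => by omega)
    refine (he.sub ho).congr fun j => ?_
    push_cast
    ring_nf
  obtain ⟨hI, hval2⟩ := key_tsum measurableSet_Ioi hmeas h0 hg hint hsum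
  refine ⟨hI, ?_⟩
  rw [hval2, tsum_congr hval, tsum_mul_left]

lemma integrableOn_null_singleton (f : ℝ → ℝ) : IntegrableOn f {(0:ℝ)} := by
  rw [IntegrableOn, Measure.restrict_eq_zero.2 (by simp)]
  exact integrable_zero_measure

lemma int_Iic_of_neg {f : ℝ → ℝ} (h : IntegrableOn (fun x => f (-x)) (Ioi 0)) :
    IntegrableOn f (Iic 0) := by
  have h2 : Integrable (Set.indicator (Ioi 0) (fun x => f (-x))) :=
    (integrable_indicator_iff measurableSet_Ioi).2 h
  have h3 := h2.comp_neg
  have h4 : (fun x => Set.indicator (Ioi 0) (fun y => f (-y)) (-x)) = Set.indicator (Iio 0) f := by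
    funext x
    by_cases hx : x < 0
    · rw [Set.indicator_of_mem (mem_Iio.2 hx), Set.indicator_of_mem (by simpa using hx), neg_neg]
    · rw [Set.indicator_of_notMem (by simpa using hx),
        Set.indicator_of_notMem (by simpa using hx)]
  rw [h4] at h3
  have h5 : IntegrableOn f (Iio 0) := (integrable_indicator_iff measurableSet_Iio).1 h3
  rw [show Iic (0:ℝ) = Iio 0 ∪ {0} from (Iio_union_right).symm]
  exact h5.union (integrableOn_null_singleton f)

lemma real_side (p : ℕ) {a b : ℝ} (ha : 0 < a) (hb : 0 < b) :
    Integrable (fun x : ℝ => x^(2*p) * Real.log |1 - Real.exp (a*x)| / (1 + Real.exp (b*x))) ∧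
    ∫ x : ℝ, x^(2*p) * Real.log |1 - Real.exp (a*x)| / (1 + Real.exp (b*x))
      = (∫ x in Ioi (0:ℝ), x^(2*p) * Real.log (1 - Real.exp (-(a*x))))
        + a * ∫ x in Ioi (0:ℝ), x^(2*p+1) / (1 + Real.exp (b*x)) := by
  set k := 2*p with hk
  set gR : ℝ → ℝ := fun x => x^k * Real.log |1 - Real.exp (a*x)| / (1 + Real.exp (b*x)) with hgR
  set φ : ℝ → ℝ := fun x => x^k * Real.log (1 - Real.exp (-(a*x))) with hφ
  set ψ : ℝ → ℝ := fun x => x^(k+1) / (1 + Real.exp (b*x)) with hψ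
  set χ : ℝ → ℝ := fun x => x^k * Real.log (1 - Real.exp (-(a*x))) / (1 + Real.exp (b*x)) with hχ
  set χ' : ℝ → ℝ := fun x => x^k * Real.log (1 - Real.exp (-(a*x))) / (1 + Real.exp (-(b*x)))
    with hχ'
  have hφI : IntegrableOn φ (Ioi 0) :=
    MeasureTheory.IntegrableOn.congr_fun (phi_side p ha).1.neg
      (fun x _ => neg_neg _) measurableSet_Ioi
  have hψI : IntegrableOn ψ (Ioi 0) := (psi_side p hb).1
  have hφmeas : Measurable φ :=
    (measurable_id.pow_const k).mul
      (Real.measurable_log.comp (measurable_const.sub ((measurable_id.const_mul a).neg.exp)))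
  have hden : ∀ c : ℝ, ∀ x : ℝ, (0:ℝ) < 1 + Real.exp (c*x) := fun c x => by positivity
  have hdiv : ∀ (c : ℝ), IntegrableOn (fun x => φ x / (1 + Real.exp (c*x))) (Ioi 0) := by
    intro c
    refine Integrable.mono' hφI.abs ?_ ?_
    · exact (hφmeas.div ((measurable_id.const_mul c).exp.const_add 1)).aestronglyMeasurable
    · filter_upwards with x
      rw [Real.norm_eq_abs, abs_div, abs_of_pos (hden c x)]
      exact div_le_self (abs_nonneg _) (by nlinarith [Real.exp_pos (c*x)])
  have hχI : IntegrableOn χ (Ioi 0) := hdiv b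
  have hχ'I : IntegrableOn χ' (Ioi 0) := by
    have := hdiv (-b)
    refine this.congr_fun (fun x _ => by simp [hχ', hφ, neg_mul]) measurableSet_Ioi
  -- log split on Ioi 0
  have hsplit : ∀ x ∈ Ioi (0:ℝ), gR x = a * ψ x + χ x := by
    intro x hx
    have hx0 : (0:ℝ) < x := hx
    have hE1 : (1:ℝ) < Real.exp (a*x) := by
      rw [← Real.exp_zero]
      exact Real.exp_lt_exp.2 (by positivity)
    have he : Real.exp (-(a*x)) < 1 := Real.exp_lt_one_iff.2 (by nlinarith)
    have habs : |1 - Real.exp (a*x)| = Real.exp (a*x) * (1 - Real.exp (-(a*x))) := by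
      rw [abs_of_neg (by linarith), Real.exp_neg]
      have hEne : Real.exp (a*x) ≠ 0 := (Real.exp_pos _).ne'
      field_simp
      ring
    have hlog : Real.log |1 - Real.exp (a*x)| = a*x + Real.log (1 - Real.exp (-(a*x))) := by
      rw [habs, Real.log_mul (Real.exp_pos _).ne' (by linarith), Real.log_exp]
    simp only [hgR, hψ, hχ, hφ, hlog]
    rw [pow_succ]
    ring
  have hIoiI : IntegrableOn gR (Ioi 0) :=
    MeasureTheory.IntegrableOn.congr_fun ((hψI.const_mul a).add hχI)
      (fun x hx => (hsplit x hx).symm) measurableSet_Ioi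
  have hIoiV : ∫ x in Ioi (0:ℝ), gR x = a * (∫ x in Ioi (0:ℝ), ψ x) + ∫ x in Ioi (0:ℝ), χ x := by
    rw [setIntegral_congr_fun measurableSet_Ioi hsplit, integral_add (hψI.const_mul a) hχI,
      integral_const_mul]
  -- negative side
  have hneg : ∀ x ∈ Ioi (0:ℝ), gR (-x) = χ' x := by
    intro x hx
    have hx0 : (0:ℝ) < x := hx
    have he : Real.exp (-(a*x)) < 1 := Real.exp_lt_one_iff.2 (by nlinarith)
    simp only [hgR, hχ']
    rw [show a * -x = -(a*x) by ring, show b * -x = -(b*x) by ring,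
      Even.neg_pow (by exact ⟨p, by omega⟩) x, abs_of_pos (by linarith)]
  have hnegI : IntegrableOn (fun x => gR (-x)) (Ioi 0) :=
    hχ'I.congr_fun (fun x hx => (hneg x hx).symm) measurableSet_Ioi
  have hIicI : IntegrableOn gR (Iic 0) := int_Iic_of_neg hnegI
  have hχ'split : ∀ x ∈ Ioi (0:ℝ), χ' x = φ x - χ x := by
    intro x hx
    simp only [hχ', hφ, hχ]
    have hE : (0:ℝ) < Real.exp (b*x) := Real.exp_pos _
    have key : ∀ t : ℝ, t / (1 + Real.exp (-(b*x))) = t - t / (1 + Real.exp (b*x)) := by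
      intro t
      rw [Real.exp_neg]
      have h1 : (1:ℝ) + (Real.exp (b*x))⁻¹ ≠ 0 := by positivity
      have h2 : (1:ℝ) + Real.exp (b*x) ≠ 0 := by positivity
      have h3 : Real.exp (b*x) ≠ 0 := hE.ne'
      field_simp
      ring
    exact key _
  have hIicV : ∫ x in Iic (0:ℝ), gR x
      = (∫ x in Ioi (0:ℝ), φ x) - ∫ x in Ioi (0:ℝ), χ x := by
    have h1 : ∫ x in Iic (0:ℝ), gR x = ∫ x in Ioi (0:ℝ), gR (-x) := by
      rw [integral_comp_neg_Ioi, neg_zero]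
    rw [h1, setIntegral_congr_fun measurableSet_Ioi hneg,
      setIntegral_congr_fun measurableSet_Ioi hχ'split,
      integral_sub hφI hχI]
  have hInt : Integrable gR := by
    rw [← integrableOn_univ, ← Set.Iic_union_Ioi (a := (0:ℝ))]
    exact hIicI.union hIoiI
  refine ⟨hInt, ?_⟩
  rw [← intervalIntegral.integral_Iic_add_Ioi hIicI hIoiI, hIicV, hIoiV]
  ring

lemma complex_side (p : ℕ) {a b : ℝ} (ha : 0 < a) (hb : 0 < b) :
    (∫ x : ℝ, (x:ℂ)^(2*p) * Complex.log (1 - (Real.exp (a*x) : ℂ)) /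
        (1 + (Real.exp (b*x) : ℂ))).re
      = ∫ x : ℝ, x^(2*p) * Real.log |1 - Real.exp (a*x)| / (1 + Real.exp (b*x)) := by
  set k := 2*p with hk
  set gR : ℝ → ℝ := fun x => x^k * Real.log |1 - Real.exp (a*x)| / (1 + Real.exp (b*x)) with hgR
  set mI : ℝ → ℝ := fun x => x^k * (1 - (Real.exp (a*x) : ℂ)).arg / (1 + Real.exp (b*x)) with hmI
  have hG : ∀ x : ℝ, (x:ℂ)^k * Complex.log (1 - (Real.exp (a*x):ℂ)) / (1 + (Real.exp (b*x):ℂ))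
      = ((gR x : ℝ) : ℂ) + ((mI x : ℝ) : ℂ) * Complex.I := by
    intro x
    set w := Complex.log (1 - (Real.exp (a*x):ℂ)) with hw
    have h1 : w = ((Real.log |1 - Real.exp (a*x)| : ℝ) : ℂ)
        + (((1 - (Real.exp (a*x):ℂ)).arg : ℝ) : ℂ) * Complex.I := by
      rw [← Complex.re_add_im w]
      congr 2
      · rw [hw, Complex.log_re]
        congr 1
        rw [show (1 : ℂ) - (Real.exp (a*x):ℂ) = ((1 - Real.exp (a*x) : ℝ) : ℂ) by push_cast; ring,
          Complex.norm_real, Real.norm_eq_abs]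
      · rw [hw, Complex.log_im]
    rw [h1]
    have hr : ((1:ℝ) + Real.exp (b*x)) ≠ 0 := by positivity
    simp only [hgR, hmI]
    push_cast
    field_simp
  -- identify mI with an indicator
  have hmind : mI = Set.indicator (Ioi 0) (fun x => x^k * Real.pi / (1 + Real.exp (b*x))) := by
    funext x
    rcases lt_trichotomy x 0 with hx | hx | hx
    · rw [Set.indicator_of_notMem (by simp [not_lt.2 hx.le])]
      simp only [hmI]
      have h1 : Real.exp (a*x) < 1 := Real.exp_lt_one_iff.2 (by nlinarith)
      have h2 : (1:ℂ) - (Real.exp (a*x):ℂ) = ((1 - Real.exp (a*x) : ℝ) : ℂ) := by push_cast; ring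
      rw [h2, Complex.arg_ofReal_of_nonneg (by linarith)]
      simp
    · subst hx
      rw [Set.indicator_of_notMem (by simp)]
      simp only [hmI]
      simp
    · rw [Set.indicator_of_mem (mem_Ioi.2 hx)]
      simp only [hmI]
      have h1 : (1:ℝ) < Real.exp (a*x) := by
        rw [← Real.exp_zero]; exact Real.exp_lt_exp.2 (by positivity)
      have h2 : (1:ℂ) - (Real.exp (a*x):ℂ) = ((1 - Real.exp (a*x) : ℝ) : ℂ) := by push_cast; ring
      rw [h2, Complex.arg_ofReal_of_neg (by linarith)]
  have hmint : Integrable mI := by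
    rw [hmind]
    refine (integrable_indicator_iff measurableSet_Ioi).2 ?_
    refine Integrable.mono' ((integrableOn_pow_mul_exp k hb).mul_const Real.pi) ?_ ?_
    · have hden : ∀ x : ℝ, (1:ℝ) + Real.exp (b*x) ≠ 0 := fun x => by positivity
      exact (((continuous_pow k).mul continuous_const).div
        (by continuity) hden).aestronglyMeasurable.restrict
    · filter_upwards [ae_restrict_mem measurableSet_Ioi] with x hx
      have hx0 : (0:ℝ) < x := hx
      have hxk : (0:ℝ) ≤ x^k := pow_nonneg hx0.le k
      have hpos : (0:ℝ) < 1 + Real.exp (b*x) := by positivity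
      rw [Real.norm_eq_abs, abs_of_nonneg (by positivity), div_le_iff₀ hpos]
      have h5 : Real.exp (-(b*x)) * Real.exp (b*x) = 1 := by rw [← Real.exp_add]; simp
      have hexpand : x^k * Real.exp (-(b*x)) * Real.pi * (1 + Real.exp (b*x))
          = x^k*Real.pi*Real.exp (-(b*x)) + x^k*Real.pi := by
        linear_combination (x^k*Real.pi) * h5
      rw [hexpand]
      nlinarith [mul_nonneg (mul_nonneg hxk Real.pi_pos.le) (Real.exp_pos (-(b*x))).le]
  have hgRI := (real_side p ha hb).1
  have hGI : Integrable (fun x : ℝ =>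
      (x:ℂ)^k * Complex.log (1 - (Real.exp (a*x):ℂ)) / (1 + (Real.exp (b*x):ℂ))) := by
    rw [show (fun x : ℝ => (x:ℂ)^k * Complex.log (1 - (Real.exp (a*x):ℂ))
        / (1 + (Real.exp (b*x):ℂ))) = fun x => ((gR x : ℝ) : ℂ) + ((mI x : ℝ) : ℂ) * Complex.I
      from funext hG]
    exact hgRI.ofReal.add (hmint.ofReal.mul_const Complex.I)
  have h2 : (∫ x : ℝ, (x:ℂ)^k * Complex.log (1 - (Real.exp (a*x):ℂ))
      / (1 + (Real.exp (b*x):ℂ))).re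
      = RCLike.re (∫ x : ℝ, (x:ℂ)^k * Complex.log (1 - (Real.exp (a*x):ℂ))
        / (1 + (Real.exp (b*x):ℂ))) := rfl
  rw [h2, ← integral_re hGI]
  refine integral_congr_ae (Eventually.of_forall fun x => ?_)
  show RCLike.re ((x:ℂ)^k * Complex.log (1 - (Real.exp (a*x):ℂ))
      / (1 + (Real.exp (b*x):ℂ))) = gR x
  rw [RCLike.re_to_complex, hG x]
  simp


theorem stmt15 (p : ℕ) (a b : ℝ) (ha : 0 < a) (hb : 0 < b)
    (h : 1 - (a/b)^(2*p+2)*(2*(p:ℝ)+1)*(1 - (2:ℝ)^(-1-2*(p:ℤ))) ≠ 0) :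
    rZeta (2*p+2) =
      -(a^(2*p+1) / (((2*p).factorial : ℝ) *
          (1 - (a/b)^(2*p+2)*(2*(p:ℝ)+1)*(1 - (2:ℝ)^(-1-2*(p:ℤ)))))) *
        (∫ x : ℝ, (x:ℂ)^(2*p) * Complex.log (1 - (Real.exp (a*x) : ℂ)) /
          (1 + (Real.exp (b*x) : ℂ))).re := by
  have hz : (2:ℝ)^(-1-2*(p:ℤ)) = 2*((2:ℝ)^(2*p+2))⁻¹ := by
    rw [show -1-2*(p:ℤ) = -((2*p+1 : ℕ) : ℤ) by push_cast; ring, zpow_neg, zpow_natCast,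
      pow_succ]
    have h1 : ((2:ℝ)^(2*p+1)) ≠ 0 := by positivity
    field_simp
    ring
  unfold rZeta
  set Z : ℝ := ∑' n : ℕ, 1 / ((n : ℝ)+1)^(2*p+2) with hZ
  have hφv : ∫ x in Set.Ioi (0:ℝ), x^(2*p) * Real.log (1 - Real.exp (-(a*x)))
      = -(((2*p).factorial / a^(2*p+1)) * Z) := by
    have h := (phi_side p ha).2
    rw [integral_neg] at h
    linarith
  have hψv : ∫ x in Set.Ioi (0:ℝ), x^(2*p+1) / (1 + Real.exp (b*x))
      = ((2*p+1).factorial / b^(2*p+2)) * ((1 - 2*((2:ℝ)^(2*p+2))⁻¹) * Z) := by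
    rw [(psi_side p hb).2, eta_Z (2*p+2) (by omega)]
  rw [complex_side p ha hb, (real_side p ha hb).2, hz]
  rw [hz] at h
  have hF : (((2*p).factorial : ℝ)) ≠ 0 := Nat.cast_ne_zero.2 (Nat.factorial_ne_zero _)
  have hfs : (((2*p+1).factorial : ℝ)) = (2*(p:ℝ)+1) * ((2*p).factorial : ℝ) := by
    rw [Nat.factorial_succ]
    push_cast
    ring
  have ha' : a ≠ 0 := ha.ne'
  have hb' : b ≠ 0 := hb.ne'
  have h2 : ((2:ℝ)^(2*p+2)) ≠ 0 := by positivity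
  set D : ℝ := 1 - (a/b)^(2*p+2)*(2*(p:ℝ)+1)*(1 - 2*((2:ℝ)^(2*p+2))⁻¹) with hDdef
  have hI : (∫ x in Set.Ioi (0:ℝ), x^(2*p) * Real.log (1 - Real.exp (-(a*x))))
      + a * (∫ x in Set.Ioi (0:ℝ), x^(2*p+1) / (1 + Real.exp (b*x)))
      = -(((2*p).factorial:ℝ)/a^(2*p+1))*D*Z := by
    rw [hφv, hψv, hfs, hDdef, div_pow]
    field_simp
    ring
  rw [hI]
  field_simp
end

section
/- Let p ∈ ℕ (possibly 0), t ≥ 1 an integer, and q > 0 a real number. Then ∫_{0}^{1} (log x)^p · ( ∑_{k=1}^{∞} (−1)^k x^{qk}/k^t ) / x dx = ((−1)^{p+1}·p! / q^{p+1})·η(p+t+1), where log is the real natural logarithm (the series is the polylogarithm Li_t(−x^q) for 0 < x < 1). -/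
open MeasureTheory Filter

private lemma expNeg_image : (fun s : ℝ => Real.exp (-s)) '' Set.Ioi 0 = Set.Ioo (0:ℝ) 1 := by
  ext x
  constructor
  · rintro ⟨s, hs, rfl⟩
    exact ⟨Real.exp_pos _, Real.exp_lt_one_iff.mpr (by simpa using hs)⟩
  · rintro ⟨hx0, hx1⟩
    exact ⟨-Real.log x, by simpa using Real.log_neg hx0 hx1, by simp [Real.exp_log hx0]⟩

private lemma expNeg_hasDeriv (s : ℝ) :
    HasDerivWithinAt (fun s : ℝ => Real.exp (-s)) (-Real.exp (-s)) (Set.Ioi 0) s := by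
  have h : HasDerivAt (fun s : ℝ => Real.exp (-s)) (Real.exp (-s) * (-1)) s :=
    (Real.hasDerivAt_exp (-s)).comp s (hasDerivAt_neg s)
  simpa using h.hasDerivWithinAt

private lemma expNeg_injOn : Set.InjOn (fun s : ℝ => Real.exp (-s)) (Set.Ioi 0) :=
  (Real.exp_injective.comp neg_injective).injOn

private lemma integral_Ioo_eq (g : ℝ → ℝ) :
    ∫ x in Set.Ioo (0:ℝ) 1, g x
      = ∫ s in Set.Ioi (0:ℝ), Real.exp (-s) * g (Real.exp (-s)) := by
  rw [← expNeg_image, MeasureTheory.integral_image_eq_integral_abs_deriv_smul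
    measurableSet_Ioi (fun s _ => expNeg_hasDeriv s) expNeg_injOn g]
  refine setIntegral_congr_fun measurableSet_Ioi fun s _ => ?_
  simp [abs_of_pos (Real.exp_pos _)]

private lemma key_integral (p : ℕ) {a : ℝ} (ha : 0 < a) :
    ∫ x in Set.Ioo (0:ℝ) 1, (-Real.log x)^p * x ^ a / x
      = (p.factorial : ℝ) / a ^ (p+1) := by
  rw [integral_Ioo_eq fun x => (-Real.log x)^p * x ^ a / x]
  have h1 : ∀ s ∈ Set.Ioi (0:ℝ),
      Real.exp (-s) * ((-Real.log (Real.exp (-s)))^p * (Real.exp (-s)) ^ a / Real.exp (-s))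
        = s ^ (((p:ℝ)+1) - 1) * Real.exp (-(a * s)) := by
    intro s hs
    rw [Real.log_exp, neg_neg, Real.rpow_def_of_pos (Real.exp_pos _), Real.log_exp]
    have h2 : ((p:ℝ)+1) - 1 = (p:ℝ) := by ring
    rw [h2, Real.rpow_natCast, show -(a*s) = -s*a by ring]
    field_simp
  rw [setIntegral_congr_fun measurableSet_Ioi h1,
    Real.integral_rpow_mul_exp_neg_mul_Ioi (by positivity : (0:ℝ) < (p:ℝ)+1) ha,
    Real.Gamma_nat_eq_factorial]
  have h3 : ((p:ℝ)+1) = ((p+1 : ℕ) : ℝ) := by push_cast; ring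
  rw [h3, Real.rpow_natCast, div_pow, one_pow]
  ring

private lemma key_integrable (p : ℕ) {a : ℝ} (ha : 0 < a) :
    MeasureTheory.IntegrableOn (fun x => (Real.log x)^p * x ^ a / x) (Set.Ioo (0:ℝ) 1) := by
  rw [← expNeg_image, MeasureTheory.integrableOn_image_iff_integrableOn_abs_deriv_smul
    measurableSet_Ioi (fun s _ => expNeg_hasDeriv s) expNeg_injOn]
  have hbase : MeasureTheory.IntegrableOn
      (fun s : ℝ => s ^ ((p:ℝ)) * Real.exp (-a * s ^ (1:ℝ))) (Set.Ioi (0:ℝ)) :=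
    integrableOn_rpow_mul_exp_neg_mul_rpow
      (neg_one_lt_zero.trans_le (Nat.cast_nonneg p)) one_pos ha
  have hbase2 : MeasureTheory.IntegrableOn
      (fun s : ℝ => ((-1:ℝ)^p) * (s ^ ((p:ℝ)) * Real.exp (-a * s ^ (1:ℝ))))
      (Set.Ioi (0:ℝ)) := hbase.const_mul _
  refine hbase2.congr_fun (fun s hs => ?_) measurableSet_Ioi
  beta_reduce
  rw [smul_eq_mul, abs_neg, abs_of_pos (Real.exp_pos _), Real.log_exp,
    Real.rpow_def_of_pos (Real.exp_pos _), Real.log_exp, Real.rpow_one,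
    Real.rpow_natCast, neg_pow s p, show (-s*a : ℝ) = -a*s by ring]
  field_simp

private lemma summable_aux_s19 {m : ℕ} (hm : 2 ≤ m) :
    Summable (fun k : ℕ => 1 / ((k:ℝ)+1)^m) := by
  have h := (summable_nat_add_iff 1).mpr (Real.summable_one_div_nat_pow.mpr (by omega : 1 < m))
  exact h.congr fun k => by push_cast; ring

theorem stmt19 (p t : ℕ) (ht : 1 ≤ t) (q : ℝ) (hq : 0 < q) :
    (∫ x in Set.Ioo (0:ℝ) 1,
        (Real.log x)^p * (∑' k : ℕ, (-1:ℝ)^(k+1) * x ^ (q*((k:ℝ)+1)) / ((k:ℝ)+1)^t) / x) =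
    ((-1:ℝ)^(p+1) * (p.factorial : ℝ) / q^(p+1)) * dEta (p+t+1) := by
  have hq' : q ≠ 0 := hq.ne'
  set f : ℕ → ℝ → ℝ := fun k x =>
    (Real.log x)^p * ((-1:ℝ)^(k+1) * x ^ (q*((k:ℝ)+1)) / ((k:ℝ)+1)^t) / x with hf
  have hck : ∀ k : ℕ, (0:ℝ) < q*((k:ℝ)+1) := fun k => by positivity
  have hk1 : ∀ k : ℕ, ((k:ℝ)+1) ≠ 0 := fun k => by positivity
  -- pointwise identity pulling tsum out
  have hpt : ∀ x ∈ Set.Ioo (0:ℝ) 1,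
      (Real.log x)^p * (∑' k : ℕ, (-1:ℝ)^(k+1) * x ^ (q*((k:ℝ)+1)) / ((k:ℝ)+1)^t) / x
        = ∑' k : ℕ, f k x := by
    intro x _
    rw [hf, div_eq_mul_inv, ← tsum_mul_left, ← tsum_mul_right]
    exact tsum_congr fun k => by simp only [hf, div_eq_mul_inv]
  rw [setIntegral_congr_fun measurableSet_Ioo hpt]
  -- integrability of each term
  have hint : ∀ k : ℕ, MeasureTheory.IntegrableOn (f k) (Set.Ioo (0:ℝ) 1) := by
    intro k
    have h2 : MeasureTheory.IntegrableOn
        (fun x : ℝ => ((-1:ℝ)^(k+1)/((k:ℝ)+1)^t) * ((Real.log x)^p * x ^ (q*((k:ℝ)+1)) / x))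
        (Set.Ioo (0:ℝ) 1) := (key_integrable p (hck k)).const_mul _
    refine h2.congr_fun (fun x _ => ?_) measurableSet_Ioo
    simp only [hf]; ring
  -- norm integrals
  have hnorm : ∀ k : ℕ, (∫ x in Set.Ioo (0:ℝ) 1, ‖f k x‖)
      = (1/((k:ℝ)+1)^t) * ((p.factorial:ℝ)/(q*((k:ℝ)+1))^(p+1)) := by
    intro k
    have h1 : ∀ x ∈ Set.Ioo (0:ℝ) 1,
        ‖f k x‖ = (1/((k:ℝ)+1)^t) * ((-Real.log x)^p * x ^ (q*((k:ℝ)+1)) / x) := by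
      intro x hx
      have hlx : |Real.log x| = -Real.log x := abs_of_neg (Real.log_neg hx.1 hx.2)
      have hX : |x ^ (q*((k:ℝ)+1))| = x ^ (q*((k:ℝ)+1)) :=
        abs_of_nonneg (Real.rpow_nonneg hx.1.le _)
      have hk : |((k:ℝ)+1)^t| = ((k:ℝ)+1)^t := abs_of_pos (by positivity)
      rw [hf, Real.norm_eq_abs, abs_div, abs_mul, abs_div, abs_mul, abs_pow, abs_pow,
        abs_neg, abs_one, one_pow, hlx, hX, hk, abs_of_pos hx.1, neg_pow, neg_pow]
      ring
    rw [setIntegral_congr_fun measurableSet_Ioo h1, MeasureTheory.integral_const_mul,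
      key_integral p (hck k)]
  -- summability of norm integrals
  have hsum : Summable fun k : ℕ => ∫ x in Set.Ioo (0:ℝ) 1, ‖f k x‖ := by
    have hs : Summable (fun k : ℕ =>
        ((p.factorial:ℝ)/q^(p+1)) * (1/((k:ℝ)+1)^(t+(p+1)))) :=
      (summable_aux_s19 (by omega)).mul_left _
    refine (hs.congr fun k => ?_).congr fun k => (hnorm k).symm
    rw [mul_pow, pow_add ((k:ℝ)+1) t (p+1)]
    have hkk := hk1 k
    field_simp
  rw [← MeasureTheory.integral_tsum_of_summable_integral_norm hint hsum]
  -- evaluate each integral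
  have hIk : ∀ k : ℕ, (∫ x in Set.Ioo (0:ℝ) 1, f k x)
      = ((-1:ℝ)^(p+1) * (p.factorial : ℝ) / q^(p+1)) * ((-1:ℝ)^k / ((k:ℝ)+1)^(p+t+1)) := by
    intro k
    have h1 : ∀ x ∈ Set.Ioo (0:ℝ) 1,
        f k x = ((-1:ℝ)^(k+1) * (-1:ℝ)^p /((k:ℝ)+1)^t)
          * ((-Real.log x)^p * x ^ (q*((k:ℝ)+1)) / x) := by
      intro x _
      have hL : (Real.log x)^p = (-1:ℝ)^p * (-Real.log x)^p := by
        rw [← mul_pow, neg_mul_neg, one_mul]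
      simp only [hf]
      rw [hL]
      ring
    rw [setIntegral_congr_fun measurableSet_Ioo h1, MeasureTheory.integral_const_mul,
      key_integral p (hck k), mul_pow]
    rw [pow_succ (-1:ℝ) k, pow_succ (-1:ℝ) p, pow_add ((k:ℝ)+1) (p+t), pow_add ((k:ℝ)+1) p]
    field_simp
    ring
  rw [tsum_congr hIk, tsum_mul_left]
  have h0 : p + t + 1 ≠ 0 := by omega
  have h1 : p + t + 1 ≠ 1 := by omega
  rw [dEta, if_neg h0, if_neg h1]
end
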